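/- arXiv:1606.07592 — 10 statements merged into one kernel-verified Lean document; each statement's English description precedes it below -/
import Mathlib

section
/- Let S be a ring graded by a group G with R = S_e. Then S is epsilon-strongly graded by G if and only if S is symmetrically graded (i.e. S_g S_{g⁻¹} S_g = S_g for all g) and for every g ∈ G the R-ideal S_g S_{g⁻¹} is unital. -/
open Pointwise

variable {S : Type*} [Ring S] {ι : Type*} [AddGroup ι]

/-- `I` is a unital ideal of the principal component `𝒜 0`. -/
def IsUnitalIdealOfZero (𝒜 : ι → AddSubgroup S) (I : AddSubgroup S) : Prop :=
  I ≤ 𝒜 0 ∧ (∀ r ∈ 𝒜 0, ∀ x ∈ I, r * x ∈ I ∧ x * r ∈ I) ∧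
    ∃ e ∈ I, ∀ x ∈ I, e * x = x ∧ x * e = x

/-- `S` is epsilon-strongly graded by the (additively written) group `ι`:
for each `g`, `𝒜 g * 𝒜 (-g)` is a unital ideal of `𝒜 0` and
`𝒜 g * 𝒜 h = (𝒜 g * 𝒜 (-g)) * 𝒜 (g+h) = 𝒜 (g+h) * (𝒜 (-h) * 𝒜 h)`. -/
def IsEpsilonStronglyGraded (𝒜 : ι → AddSubgroup S) : Prop :=
  (∀ g : ι, IsUnitalIdealOfZero 𝒜 (𝒜 g * 𝒜 (-g))) ∧
    ∀ g h : ι, 𝒜 g * 𝒜 h = (𝒜 g * 𝒜 (-g)) * 𝒜 (g + h) ∧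
      𝒜 g * 𝒜 h = 𝒜 (g + h) * (𝒜 (-h) * 𝒜 h)

private lemma AG.mul_mem_mul {M N : AddSubgroup S} {m n : S} (hm : m ∈ M) (hn : n ∈ N) :
    m * n ∈ M * N :=
  AddSubmonoid.mul_mem_mul hm hn

private lemma AG.mul_le {M N P : AddSubgroup S} : M * N ≤ P ↔ ∀ m ∈ M, ∀ n ∈ N, m * n ∈ P :=
  AddSubmonoid.mul_le (M := M.toAddSubmonoid) (N := N.toAddSubmonoid) (P := P.toAddSubmonoid)

private lemma AG.mul_assoc (M N P : AddSubgroup S) : M * N * P = M * (N * P) := by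
  apply AddSubgroup.toAddSubmonoid_injective
  rw [AddSubgroup.mul_toAddSubmonoid, AddSubgroup.mul_toAddSubmonoid,
      AddSubgroup.mul_toAddSubmonoid, AddSubgroup.mul_toAddSubmonoid, _root_.mul_assoc]

private lemma AG.mul_le_mul_left {M N : AddSubgroup S} (h : M ≤ N) (P : AddSubgroup S) :
    P * M ≤ P * N :=
  AG.mul_le.2 fun _ hp _ hm => AG.mul_mem_mul hp (h hm)

private lemma AG.mul_le_mul_right {M N : AddSubgroup S} (h : M ≤ N) (P : AddSubgroup S) :
    M * P ≤ N * P :=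
  AG.mul_le.2 fun _ hm _ hp => AG.mul_mem_mul (h hm) hp

private lemma AG.graded_mul_le [DecidableEq ι] (𝒜 : ι → AddSubgroup S) [GradedRing 𝒜]
    (g h : ι) : 𝒜 g * 𝒜 h ≤ 𝒜 (g + h) :=
  AG.mul_le.2 fun _ ha _ hb => SetLike.mul_mem_graded ha hb

private lemma AG.zero_mul [DecidableEq ι] (𝒜 : ι → AddSubgroup S) [GradedRing 𝒜]
    (g : ι) : 𝒜 0 * 𝒜 g = 𝒜 g := by
  apply le_antisymm
  · have := AG.graded_mul_le 𝒜 0 g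
    rwa [zero_add] at this
  · intro x hx
    have h1 : (1 : S) ∈ 𝒜 0 := SetLike.one_mem_graded 𝒜
    simpa using AG.mul_mem_mul h1 hx

private lemma AG.mul_zero [DecidableEq ι] (𝒜 : ι → AddSubgroup S) [GradedRing 𝒜]
    (g : ι) : 𝒜 g * 𝒜 0 = 𝒜 g := by
  apply le_antisymm
  · have := AG.graded_mul_le 𝒜 g 0
    rwa [add_zero] at this
  · intro x hx
    have h1 : (1 : S) ∈ 𝒜 0 := SetLike.one_mem_graded 𝒜
    simpa using AG.mul_mem_mul hx h1

/-- `S` is epsilon-strongly graded iff `S` is symmetrically graded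
(`S_g S_{g⁻¹} S_g = S_g` for all `g`) and every `R`-ideal `S_g S_{g⁻¹}` is unital. -/
theorem isEpsilonStronglyGraded_iff_symmetric_and_unital [DecidableEq ι]
    (𝒜 : ι → AddSubgroup S) [GradedRing 𝒜] :
    IsEpsilonStronglyGraded 𝒜 ↔
      ((∀ g : ι, (𝒜 g * 𝒜 (-g)) * 𝒜 g = 𝒜 g) ∧
        ∀ g : ι, IsUnitalIdealOfZero 𝒜 (𝒜 g * 𝒜 (-g))) := by
  constructor
  · rintro ⟨hu, hp⟩
    refine ⟨fun g => ?_, hu⟩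
    have := (hp g 0).1
    rw [add_zero, AG.mul_zero 𝒜 g] at this
    exact this.symm
  · rintro ⟨hs, hu⟩
    refine ⟨hu, fun g h => ?_⟩
    constructor
    · apply le_antisymm
      · calc 𝒜 g * 𝒜 h = ((𝒜 g * 𝒜 (-g)) * 𝒜 g) * 𝒜 h := by rw [hs g]
          _ = (𝒜 g * 𝒜 (-g)) * (𝒜 g * 𝒜 h) := AG.mul_assoc _ _ _
          _ ≤ (𝒜 g * 𝒜 (-g)) * 𝒜 (g + h) :=
            AG.mul_le_mul_left (AG.graded_mul_le 𝒜 g h) _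
      · calc (𝒜 g * 𝒜 (-g)) * 𝒜 (g + h) = 𝒜 g * (𝒜 (-g) * 𝒜 (g + h)) := AG.mul_assoc _ _ _
          _ ≤ 𝒜 g * 𝒜 (-g + (g + h)) := AG.mul_le_mul_left (AG.graded_mul_le 𝒜 _ _) _
          _ = 𝒜 g * 𝒜 h := by rw [neg_add_cancel_left]
    · apply le_antisymm
      · calc 𝒜 g * 𝒜 h = 𝒜 g * ((𝒜 h * 𝒜 (-h)) * 𝒜 h) := by rw [hs h]
          _ = 𝒜 g * (𝒜 h * (𝒜 (-h) * 𝒜 h)) := by rw [AG.mul_assoc]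
          _ = (𝒜 g * 𝒜 h) * (𝒜 (-h) * 𝒜 h) := (AG.mul_assoc _ _ _).symm
          _ ≤ 𝒜 (g + h) * (𝒜 (-h) * 𝒜 h) :=
            AG.mul_le_mul_right (AG.graded_mul_le 𝒜 g h) _
      · calc 𝒜 (g + h) * (𝒜 (-h) * 𝒜 h) = (𝒜 (g + h) * 𝒜 (-h)) * 𝒜 h :=
            (AG.mul_assoc _ _ _).symm
          _ ≤ 𝒜 (g + h + -h) * 𝒜 h := AG.mul_le_mul_right (AG.graded_mul_le 𝒜 _ _) _
          _ = 𝒜 g * 𝒜 h := by rw [add_neg_cancel_right]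
end

section
/- Let S be a ring graded by a group G with R = S_e. If for every g ∈ G there is ε_g ∈ S_g S_{g⁻¹} such that ε_g s = s = s ε_{g⁻¹} for all s ∈ S_g, then for every g ∈ G, S_g is finitely generated and projective as a left R-module. -/
open Pointwise

variable {S : Type*} [Ring S] {ι : Type*} [AddGroup ι]

/-- The left module structure of the principal component `𝒜 0` on each
homogeneous component `𝒜 g`, given by ring multiplication. -/
def gradeZeroModule [DecidableEq ι] (𝒜 : ι → AddSubgroup S) [GradedRing 𝒜] (g : ι) :
    Module (𝒜 0) (𝒜 g) where
  smul r x := ⟨(r : S) * (x : S), by simpa using SetLike.mul_mem_graded r.2 x.2⟩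
  one_smul x := Subtype.ext (one_mul (x : S))
  mul_smul r r' x := Subtype.ext (mul_assoc (r : S) (r' : S) (x : S))
  smul_zero r := Subtype.ext (mul_zero (r : S))
  smul_add r x y := Subtype.ext (mul_add (r : S) (x : S) (y : S))
  add_smul r r' x := Subtype.ext (add_mul (r : S) (r' : S) (x : S))
  zero_smul x := Subtype.ext (zero_mul (x : S))

/-- If for every `g` there is `ε g ∈ S_g S_{g⁻¹}` with `ε g * s = s = s * ε (-g)` for all
`s ∈ S_g`, then every `S_g` is a finitely generated projective left module over `R = S_e`. -/
theorem component_finite_projective [DecidableEq ι] (𝒜 : ι → AddSubgroup S) [GradedRing 𝒜]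
    (ε : ι → S) (hmem : ∀ g : ι, ε g ∈ 𝒜 g * 𝒜 (-g))
    (hid : ∀ g : ι, ∀ s ∈ 𝒜 g, ε g * s = s ∧ s * ε (-g) = s) (g : ι) :
    letI := gradeZeroModule 𝒜 g
    Module.Finite (𝒜 0) (𝒜 g) ∧ Module.Projective (𝒜 0) (𝒜 g) := by
  classical
  letI := gradeZeroModule 𝒜 g
  -- decompose `ε (-g)` as a finite sum of products
  have key : ∀ r ∈ 𝒜 (-g) * 𝒜 g, ∃ (n : ℕ) (u v : Fin n → S),
      (∀ i, u i ∈ 𝒜 (-g)) ∧ (∀ i, v i ∈ 𝒜 g) ∧ r = ∑ i, u i * v i := by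
    intro r hr
    rw [← AddSubgroup.mem_toAddSubmonoid, AddSubgroup.mul_toAddSubmonoid] at hr
    refine AddSubmonoid.mul_induction_on hr ?_ ?_
    · intro m hm k hk
      exact ⟨1, fun _ => m, fun _ => k, fun _ => hm, fun _ => hk, by simp⟩
    · rintro a b ⟨n₁, u₁, v₁, hu₁, hv₁, h₁⟩ ⟨n₂, u₂, v₂, hu₂, hv₂, h₂⟩
      refine ⟨n₁ + n₂, Fin.append u₁ u₂, Fin.append v₁ v₂, ?_, ?_, ?_⟩
      · intro i
        refine Fin.addCases (fun j => ?_) (fun j => ?_) i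
        · rw [Fin.append_left]; exact hu₁ j
        · rw [Fin.append_right]; exact hu₂ j
      · intro i
        refine Fin.addCases (fun j => ?_) (fun j => ?_) i
        · rw [Fin.append_left]; exact hv₁ j
        · rw [Fin.append_right]; exact hv₂ j
      · rw [Fin.sum_univ_add]
        simp only [Fin.append_left, Fin.append_right]
        rw [← h₁, ← h₂]
  have hmem' : ε (-g) ∈ 𝒜 (-g) * 𝒜 g := by simpa using hmem (-g)
  obtain ⟨n, u, v, hu, hv, hsum⟩ := key (ε (-g)) hmem'
  have hR : ∀ (s : 𝒜 g) (i : Fin n), (s : S) * u i ∈ 𝒜 0 := fun s i => by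
    simpa using SetLike.mul_mem_graded s.2 (hu i)
  have coe_smul : ∀ (r : 𝒜 0) (x : 𝒜 g), ((r • x : 𝒜 g) : S) = (r : S) * (x : S) :=
    fun _ _ => rfl
  -- the splitting maps
  let σ : 𝒜 g →ₗ[𝒜 0] (Fin n → 𝒜 0) :=
    { toFun := fun s i => ⟨(s : S) * u i, hR s i⟩
      map_add' := fun s t => by
        funext i; exact Subtype.ext (add_mul (s : S) (t : S) (u i))
      map_smul' := fun r s => by
        funext i; exact Subtype.ext (mul_assoc (r : S) (s : S) (u i)) }
  let π : (Fin n → 𝒜 0) →ₗ[𝒜 0] 𝒜 g :=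
    { toFun := fun c => ∑ i, c i • (⟨v i, hv i⟩ : 𝒜 g)
      map_add' := fun c d => by
        simp only [Pi.add_apply]
        rw [← Finset.sum_add_distrib]
        exact Finset.sum_congr rfl fun i _ => add_smul (c i) (d i) _
      map_smul' := fun r c => by
        simp only [Pi.smul_apply, RingHom.id_apply]
        rw [Finset.smul_sum]
        exact Finset.sum_congr rfl fun i _ => mul_smul r (c i) _ }
  have hsplit : ∀ s : 𝒜 g, π (σ s) = s := by
    intro s
    apply Subtype.ext
    have : ((π (σ s) : 𝒜 g) : S) = ∑ i, ((s : S) * u i) * v i := by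
      show ((∑ i, _ • _ : 𝒜 g) : S) = _
      rw [AddSubmonoidClass.coe_finset_sum]
      exact Finset.sum_congr rfl fun i _ => rfl
    rw [this]
    have : ∑ i, ((s : S) * u i) * v i = (s : S) * ε (-g) := by
      rw [hsum, Finset.mul_sum]
      exact Finset.sum_congr rfl fun i _ => by rw [mul_assoc]
    rw [this]
    exact (hid g s s.2).2
  constructor
  · exact Module.Finite.of_surjective π fun s => ⟨σ s, hsplit s⟩
  · exact Module.Projective.of_split σ π (LinearMap.ext hsplit)
end

section
/- Let S be a ring graded by a group G with R = S_e. If for every g ∈ G there is ε_g ∈ S_g S_{g⁻¹} with ε_g s = s = s ε_{g⁻¹} for all s ∈ S_g, then for every g ∈ G the map n_g : S_g → Hom_R(S_{g⁻¹}, R) defined by n_g(s)(t) = t s is an isomorphism of right R-modules. -/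
open Pointwise

variable {S : Type*} [Ring S] {ι : Type*} [AddGroup ι]

/-- The map `n_g : S_g → Hom_R(S_{g⁻¹}, R)`, `n_g(s)(t) = t * s`, where
`Hom_R` denotes left `R = S_e`-linear maps. -/
def ngHom [DecidableEq ι] (𝒜 : ι → AddSubgroup S) [GradedRing 𝒜] (g : ι) (s : 𝒜 g) :
    letI := gradeZeroModule 𝒜 (-g)
    (𝒜 (-g)) →ₗ[𝒜 0] (𝒜 0) :=
  letI := gradeZeroModule 𝒜 (-g)
  { toFun := fun t => ⟨(t : S) * (s : S), by simpa using SetLike.mul_mem_graded t.2 s.2⟩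
    map_add' := fun t t' => Subtype.ext (add_mul (t : S) (t' : S) (s : S))
    map_smul' := fun r t => Subtype.ext (mul_assoc (r : S) (t : S) (s : S)) }

/-- If for every `g` there is `ε g ∈ S_g S_{g⁻¹}` with `ε g * s = s = s * ε (-g)` for all
`s ∈ S_g`, then `n_g` is an isomorphism of right `R`-modules: it is additive, bijective
onto the left `R`-linear maps `S_{g⁻¹} → R`, is given by `n_g(s)(t) = t * s`, and is
compatible with the right `R`-actions. -/
theorem ngHom_bijective [DecidableEq ι] (𝒜 : ι → AddSubgroup S) [GradedRing 𝒜]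
    (ε : ι → S) (hmem : ∀ g : ι, ε g ∈ 𝒜 g * 𝒜 (-g))
    (hid : ∀ g : ι, ∀ s ∈ 𝒜 g, ε g * s = s ∧ s * ε (-g) = s) (g : ι) :
    Function.Bijective (ngHom 𝒜 g) ∧
      (∀ (s : 𝒜 g) (t : 𝒜 (-g)), ((ngHom 𝒜 g s t : 𝒜 0) : S) = (t : S) * (s : S)) ∧
      (∀ s s' : 𝒜 g, ngHom 𝒜 g (s + s') = ngHom 𝒜 g s + ngHom 𝒜 g s') ∧
      (∀ (s : 𝒜 g) (r : 𝒜 0) (s' : 𝒜 g), (s' : S) = (s : S) * (r : S) →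
        ∀ t : 𝒜 (-g), ((ngHom 𝒜 g s' t : 𝒜 0) : S) = ((ngHom 𝒜 g s t : 𝒜 0) : S) * (r : S)) := by
  letI := gradeZeroModule 𝒜 (-g)
  have hval : ∀ (s : 𝒜 g) (t : 𝒜 (-g)), ((ngHom 𝒜 g s t : 𝒜 0) : S) = (t : S) * (s : S) :=
    fun s t => rfl
  have hadd : ∀ s s' : 𝒜 g, ngHom 𝒜 g (s + s') = ngHom 𝒜 g s + ngHom 𝒜 g s' := by
    intro s s'
    ext t
    show (t : S) * ((s : S) + (s' : S)) = (t : S) * (s : S) + (t : S) * (s' : S)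
    exact mul_add _ _ _
  refine ⟨⟨?_, ?_⟩, hval, hadd, ?_⟩
  · -- injective
    have hker : ∀ s : 𝒜 g, ngHom 𝒜 g s = 0 → s = 0 := by
      intro s hs
      have h0 : ∀ t : 𝒜 (-g), (t : S) * (s : S) = 0 := by
        intro t
        have h1 : ngHom 𝒜 g s t = 0 := by rw [hs]; rfl
        exact congrArg Subtype.val h1
      have key : ∀ e ∈ 𝒜 g * 𝒜 (-g), e * (s : S) = 0 := by
        intro e he
        refine AddSubmonoid.mul_induction_on he (fun x hx y hy => ?_) (fun a b ha hb => ?_)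
        · rw [mul_assoc, h0 ⟨y, hy⟩, mul_zero]
        · rw [add_mul, ha, hb, add_zero]
      have h1 := key (ε g) (hmem g)
      rw [(hid g s s.2).1] at h1
      exact Subtype.ext h1
    intro a b hab
    have hsub : ngHom 𝒜 g (a - b) = 0 := by
      ext t
      show (t : S) * ((a : S) - (b : S)) = ((0 : 𝒜 0) : S)
      have h1 : (t : S) * (a : S) = (t : S) * (b : S) := by
        rw [← hval a t, ← hval b t, hab]
      rw [mul_sub, h1, sub_self]
      rfl
    exact sub_eq_zero.mp (hker _ hsub)
  · -- surjective
    intro f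
    have key := AddSubmonoid.mul_induction_on
      (C := fun e => e ∈ 𝒜 (0 : ι) ∧ ∃ s : 𝒜 g, ∀ t : 𝒜 (-g),
        ∀ h : (t : S) * e ∈ 𝒜 (-g), (t : S) * (s : S) = ((f ⟨(t : S) * e, h⟩ : 𝒜 0) : S))
      (hmem g) ?_ ?_
    case refine_1 =>
      intro x hx y hy
      have hx' : x ∈ 𝒜 g := hx
      have hy' : y ∈ 𝒜 (-g) := hy
      refine ⟨by simpa using SetLike.mul_mem_graded hx' hy', ?_⟩
      refine ⟨⟨x * ((f ⟨y, hy⟩ : 𝒜 0) : S), by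
        simpa using SetLike.mul_mem_graded hx' (f ⟨y, hy⟩).2⟩, ?_⟩
      intro t h
      have hR : (t : S) * x ∈ 𝒜 (0 : ι) := by
        simpa using SetLike.mul_mem_graded t.2 hx'
      have hsm := f.map_smul (⟨(t : S) * x, hR⟩ : 𝒜 0) ⟨y, hy⟩
      have harg : (⟨(t : S) * x, hR⟩ : 𝒜 0) • (⟨y, hy⟩ : 𝒜 (-g)) =
          (⟨(t : S) * (x * y), h⟩ : 𝒜 (-g)) :=
        Subtype.ext (mul_assoc (t : S) x y)
      rw [harg] at hsm
      calc (t : S) * (x * ((f ⟨y, hy⟩ : 𝒜 0) : S))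
          = ((t : S) * x) * ((f ⟨y, hy⟩ : 𝒜 0) : S) := (mul_assoc _ _ _).symm
        _ = (((⟨(t : S) * x, hR⟩ : 𝒜 0) • f ⟨y, hy⟩ : 𝒜 0) : S) := by
            rw [smul_eq_mul]; simp
        _ = ((f ⟨(t : S) * (x * y), h⟩ : 𝒜 0) : S) := congrArg Subtype.val hsm.symm
    case refine_2 =>
      rintro a b ⟨ha0, sa, hsa⟩ ⟨hb0, sb, hsb⟩
      refine ⟨(𝒜 (0 : ι)).add_mem ha0 hb0, sa + sb, ?_⟩
      intro t h
      have hta : (t : S) * a ∈ 𝒜 (-g) := by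
        simpa using SetLike.mul_mem_graded t.2 ha0
      have htb : (t : S) * b ∈ 𝒜 (-g) := by
        simpa using SetLike.mul_mem_graded t.2 hb0
      have harg : (⟨(t : S) * (a + b), h⟩ : 𝒜 (-g)) =
          ⟨(t : S) * a, hta⟩ + ⟨(t : S) * b, htb⟩ :=
        Subtype.ext (mul_add (t : S) a b)
      rw [harg, f.map_add]
      have hco : ((f ⟨(t : S) * a, hta⟩ + f ⟨(t : S) * b, htb⟩ : 𝒜 0) : S) =
          ((f ⟨(t : S) * a, hta⟩ : 𝒜 0) : S) + ((f ⟨(t : S) * b, htb⟩ : 𝒜 0) : S) := rfl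
      rw [hco, ← hsa t hta, ← hsb t htb]
      push_cast
      rw [mul_add]
    obtain ⟨-, s, hs⟩ := key
    refine ⟨s, ?_⟩
    ext t
    have hte : (t : S) * ε g ∈ 𝒜 (-g) := by
      have h := (hid (-g) (t : S) t.2).2
      rw [neg_neg] at h
      rw [h]; exact t.2
    have h1 := hs t hte
    have h2 : (⟨(t : S) * ε g, hte⟩ : 𝒜 (-g)) = t := by
      refine Subtype.ext ?_
      have h := (hid (-g) (t : S) t.2).2
      rwa [neg_neg] at h
    rw [h2] at h1
    exact h1
  · intro s r s' hss' t
    rw [hval, hval, hss', ← mul_assoc]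
end

section
/- Let S be epsilon-strongly graded by a group G with R = S_e. For g ∈ G choose u_g^{(i)} ∈ S_g, v_{g⁻¹}^{(i)} ∈ S_{g⁻¹} with Σ_i u_g^{(i)} v_{g⁻¹}^{(i)} = ε_g, and define γ_g(s) = Σ_i u_g^{(i)} s v_{g⁻¹}^{(i)}. Then for any r ∈ Z(R), the value γ_g(r) does not depend on the choice of the elements u_g^{(i)}, v_{g⁻¹}^{(i)}: if also Σ_j s_g^{(j)} t_{g⁻¹}^{(j)} = ε_g with s_g^{(j)} ∈ S_g, t_{g⁻¹}^{(j)} ∈ S_{g⁻¹}, then Σ_i u_g^{(i)} r v_{g⁻¹}^{(i)} = Σ_j s_g^{(j)} r t_{g⁻¹}^{(j)}. -/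
open Pointwise

variable {S : Type*} [Ring S] {ι : Type*} [AddGroup ι]

/-- For `r` in the center of `R = S_e`, the value `γ_g(r) = Σᵢ uᵢ r vᵢ` does not depend on
the chosen decomposition `ε g = Σᵢ uᵢ vᵢ` with `uᵢ ∈ S_g`, `vᵢ ∈ S_{g⁻¹}`. -/
theorem gamma_well_defined [DecidableEq ι] (𝒜 : ι → AddSubgroup S) [GradedRing 𝒜]
    (h : IsEpsilonStronglyGraded 𝒜) (ε : ι → S)
    (hmem : ∀ g : ι, ε g ∈ 𝒜 g * 𝒜 (-g))
    (hid : ∀ g : ι, ∀ s ∈ 𝒜 g, ε g * s = s ∧ s * ε (-g) = s)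
    (g : ι) (r : S) (hr : r ∈ 𝒜 0) (hrc : ∀ x ∈ 𝒜 0, r * x = x * r)
    {n m : ℕ} (u : Fin n → S) (v : Fin n → S) (s : Fin m → S) (t : Fin m → S)
    (hu : ∀ i, u i ∈ 𝒜 g) (hv : ∀ i, v i ∈ 𝒜 (-g))
    (hs : ∀ j, s j ∈ 𝒜 g) (ht : ∀ j, t j ∈ 𝒜 (-g))
    (huv : ∑ i, u i * v i = ε g) (hst : ∑ j, s j * t j = ε g) :
    ∑ i, u i * r * v i = ∑ j, s j * r * t j := by
  have hv' : ∀ i, v i * ε g = v i := fun i => by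
    have := (hid (-g) (v i) (hv i)).2; rwa [neg_neg] at this
  have hs' : ∀ j, ε g * s j = s j := fun j => (hid g (s j) (hs j)).1
  have hvs : ∀ i j, v i * s j ∈ 𝒜 0 := fun i j => by
    have := SetLike.mul_mem_graded (hv i) (hs j)
    rwa [neg_add_cancel] at this
  have swap : ∀ i j, u i * r * (v i * (s j * t j)) = u i * v i * (s j * r * t j) := by
    intro i j
    have c : r * (v i * s j) = v i * s j * r := hrc _ (hvs i j)
    calc u i * r * (v i * (s j * t j)) = u i * (r * (v i * s j)) * t j := by
          simp only [mul_assoc]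
      _ = u i * (v i * s j * r) * t j := by rw [c]
      _ = u i * v i * (s j * r * t j) := by simp only [mul_assoc]
  calc ∑ i, u i * r * v i = ∑ i, u i * r * (v i * ε g) := by
        simp_rw [hv']
    _ = ∑ i, ∑ j, u i * r * (v i * (s j * t j)) := by
        simp_rw [← hst, Finset.mul_sum]
    _ = ∑ j, ∑ i, u i * v i * (s j * r * t j) := by
        rw [Finset.sum_comm]; simp_rw [swap]
    _ = ∑ j, ε g * (s j * r * t j) := by
        simp_rw [← Finset.sum_mul, huv]
    _ = ∑ j, s j * r * t j := by
        refine Finset.sum_congr rfl fun j _ => ?_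
        rw [← mul_assoc, ← mul_assoc, hs' j]
end

section
/- Let S be epsilon-strongly graded by a group G with R = S_e, and define γ_g on S by γ_g(s) = Σ_i u_g^{(i)} s v_{g⁻¹}^{(i)} where Σ_i u_g^{(i)} v_{g⁻¹}^{(i)} = ε_g with u_g^{(i)} ∈ S_g, v_{g⁻¹}^{(i)} ∈ S_{g⁻¹}. Then for all g, h ∈ G and r ∈ Z(R), γ_g(γ_h(r)) = γ_{gh}(r) ε_g. -/
open Pointwise

variable {S : Type*} [Ring S] {ι : Type*} [AddGroup ι]

/-- Key lemma: if `a ∈ 𝒜 m` with `ε m * a = a`, `∑ u k * v k = ε m` with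
`v k ∈ 𝒜 (-m)`, and `r` commutes with `𝒜 0`, then `a * r * b = γ_m(r) * (a * b)`. -/
theorem gamma_key [DecidableEq ι] (𝒜 : ι → AddSubgroup S) [GradedRing 𝒜]
    (m : ι) {n : ℕ} (u v : Fin n → S)
    (hv : ∀ i, v i ∈ 𝒜 (-m)) (r : S) (hrc : ∀ x ∈ 𝒜 0, r * x = x * r)
    (a b : S) (ha : a ∈ 𝒜 m) (hεa : (∑ k, u k * v k) * a = a) :
    a * r * b = (∑ k, u k * r * v k) * (a * b) := by
  calc a * r * b = (∑ k, u k * v k) * a * r * b := by rw [hεa]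
    _ = ∑ k, u k * v k * a * r * b := by rw [Finset.sum_mul, Finset.sum_mul, Finset.sum_mul]
    _ = ∑ k, u k * r * v k * (a * b) := by
        refine Finset.sum_congr rfl fun k _ => ?_
        have h0 : v k * a ∈ 𝒜 0 := by
          have := SetLike.mul_mem_graded (hv k) ha
          rwa [neg_add_cancel] at this
        have hc : v k * a * r = r * (v k * a) := (hrc _ h0).symm
        rw [mul_assoc (u k) (v k) a, mul_assoc (u k) (v k * a) r, hc]
        simp [mul_assoc]
    _ = (∑ k, u k * r * v k) * (a * b) := by rw [Finset.sum_mul]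

/-- For `r` in the center of `R = S_e` one has `γ_g(γ_h(r)) = γ_{gh}(r) ε_g`. -/
theorem gamma_comp [DecidableEq ι] (𝒜 : ι → AddSubgroup S) [GradedRing 𝒜]
    (h : IsEpsilonStronglyGraded 𝒜) (ε : ι → S)
    (hmem : ∀ g : ι, ε g ∈ 𝒜 g * 𝒜 (-g))
    (hid : ∀ g : ι, ∀ s ∈ 𝒜 g, ε g * s = s ∧ s * ε (-g) = s)
    (g h' : ι) (r : S) (hr : r ∈ 𝒜 0) (hrc : ∀ x ∈ 𝒜 0, r * x = x * r)
    {ng nh ngh : ℕ}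
    (ug : Fin ng → S) (vg : Fin ng → S) (uh : Fin nh → S) (vh : Fin nh → S)
    (ugh : Fin ngh → S) (vgh : Fin ngh → S)
    (hug : ∀ i, ug i ∈ 𝒜 g) (hvg : ∀ i, vg i ∈ 𝒜 (-g))
    (huh : ∀ i, uh i ∈ 𝒜 h') (hvh : ∀ i, vh i ∈ 𝒜 (-h'))
    (hugh : ∀ i, ugh i ∈ 𝒜 (g + h')) (hvgh : ∀ i, vgh i ∈ 𝒜 (-(g + h')))
    (hg : ∑ i, ug i * vg i = ε g) (hh : ∑ i, uh i * vh i = ε h')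
    (hgh : ∑ i, ugh i * vgh i = ε (g + h')) :
    ∑ j, ug j * (∑ i, uh i * r * vh i) * vg j =
      (∑ k, ugh k * r * vgh k) * ε g := by
  set Γ := ∑ k, ugh k * r * vgh k with hΓ
  calc ∑ j, ug j * (∑ i, uh i * r * vh i) * vg j
      = ∑ j, ∑ i, (ug j * uh i) * r * (vh i * vg j) := by
        refine Finset.sum_congr rfl fun j _ => ?_
        rw [Finset.mul_sum, Finset.sum_mul]
        exact Finset.sum_congr rfl fun i _ => by simp [mul_assoc]
    _ = ∑ j, ∑ i, Γ * (ug j * (uh i * vh i) * vg j) := by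
        refine Finset.sum_congr rfl fun j _ => Finset.sum_congr rfl fun i _ => ?_
        have ha : ug j * uh i ∈ 𝒜 (g + h') := SetLike.mul_mem_graded (hug j) (huh i)
        have hεa : (∑ k, ugh k * vgh k) * (ug j * uh i) = ug j * uh i := by
          rw [hgh]; exact (hid (g + h') _ ha).1
        rw [gamma_key 𝒜 (g + h') ugh vgh hvgh r hrc _ (vh i * vg j) ha hεa]
        congr 1
        simp [mul_assoc]
    _ = ∑ j, Γ * (ug j * ε h' * vg j) := by
        refine Finset.sum_congr rfl fun j _ => ?_
        rw [← Finset.mul_sum]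
        congr 1
        rw [← hh, Finset.mul_sum, Finset.sum_mul]
    _ = ∑ j, Γ * (ug j * vg j) := by
        refine Finset.sum_congr rfl fun j _ => ?_
        rw [hΓ, Finset.sum_mul, Finset.sum_mul]
        refine Finset.sum_congr rfl fun k _ => ?_
        have hw : vgh k * ug j ∈ 𝒜 (-h') := by
          have := SetLike.mul_mem_graded (hvgh k) (hug j)
          rwa [neg_add_rev, add_assoc, neg_add_cancel, add_zero] at this
        have habs : vgh k * ug j * ε h' = vgh k * ug j := by
          have := (hid (-h') _ hw).2
          rwa [neg_neg] at this
        calc ugh k * r * vgh k * (ug j * ε h' * vg j)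
            = ugh k * r * (vgh k * ug j * ε h' * vg j) := by simp [mul_assoc]
          _ = ugh k * r * (vgh k * ug j * vg j) := by rw [habs]
          _ = ugh k * r * vgh k * (ug j * vg j) := by simp [mul_assoc]
    _ = Γ * ε g := by rw [← Finset.mul_sum, hg]
end

section
/- Let S be epsilon-strongly graded by a group G with R = S_e and let γ_g be defined as above. Then γ_g restricts to a surjective ring homomorphism Z(R) → Z(R) ε_g satisfying γ_g(r) s = s r for all r ∈ Z(R) and s ∈ S_g, and this further restricts to a ring isomorphism Z(R) ε_{g⁻¹} → Z(R) ε_g. -/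
open Pointwise

variable {S : Type*} [Ring S] {ι : Type*} [AddGroup ι]

set_option linter.unusedSectionVars false
set_option linter.unusedVariables false

private lemma decomp_of_mem_mul {A B : AddSubgroup S} {x : S} (hx : x ∈ A * B) :
    ∃ (n : ℕ) (a b : Fin n → S), (∀ i, a i ∈ A) ∧ (∀ i, b i ∈ B) ∧ ∑ i, a i * b i = x := by
  refine AddSubmonoid.mul_induction_on (C := fun x => ∃ (n : ℕ) (a b : Fin n → S),
      (∀ i, a i ∈ A) ∧ (∀ i, b i ∈ B) ∧ ∑ i, a i * b i = x) hx ?_ ?_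
  · intro m hm p hp
    exact ⟨1, fun _ => m, fun _ => p, fun _ => hm, fun _ => hp, by simp⟩
  · rintro x y ⟨nx, a, b, ha, hb, hab⟩ ⟨ny, c, d, hc, hd, hcd⟩
    refine ⟨nx + ny, Fin.append a c, Fin.append b d, ?_, ?_, ?_⟩
    · intro i
      refine Fin.addCases (fun j => ?_) (fun j => ?_) i
      · simpa [Fin.append_left] using ha j
      · simpa [Fin.append_right] using hc j
    · intro i
      refine Fin.addCases (fun j => ?_) (fun j => ?_) i
      · simpa [Fin.append_left] using hb j
      · simpa [Fin.append_right] using hd j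
    · rw [Fin.sum_univ_add]
      simp [Fin.append_left, Fin.append_right, hab, hcd]

section Gamma

variable [DecidableEq ι] {𝒜 : ι → AddSubgroup S} [GradedRing 𝒜]

private lemma memk {i j k : ι} {a b : S} (ha : a ∈ 𝒜 i) (hb : b ∈ 𝒜 j) (hk : i + j = k) :
    a * b ∈ 𝒜 k := hk ▸ SetLike.mul_mem_graded ha hb

variable {g g' : ι} {n : ℕ} {u v : Fin n → S} {ε : S}

private lemma swap_zero (hgg' : g + g' = 0) : g' + g = 0 := by
  rw [← neg_eq_of_add_eq_zero_right hgg']; exact neg_add_cancel g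

private lemma gamma_mem (hgg' : g + g' = 0) (hu : ∀ i, u i ∈ 𝒜 g) (hv : ∀ i, v i ∈ 𝒜 g')
    {r : S} (hr : r ∈ 𝒜 0) : ∑ i, u i * r * v i ∈ 𝒜 0 :=
  sum_mem fun i _ => memk (memk (hu i) hr (add_zero g)) (hv i) hgg'

private lemma gamma_relA (hgg' : g + g' = 0) (hu : ∀ i, u i ∈ 𝒜 g) (hv : ∀ i, v i ∈ 𝒜 g')
    (huv : ∑ i, u i * v i = ε) (hε1 : ∀ s ∈ 𝒜 g, ε * s = s)
    {r : S} (hr : r ∈ 𝒜 0) (hc : ∀ x ∈ 𝒜 0, r * x = x * r)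
    {s : S} (hs : s ∈ 𝒜 g) : (∑ i, u i * r * v i) * s = s * r := by
  have h2 : g' + g = 0 := swap_zero hgg'
  calc (∑ i, u i * r * v i) * s = ∑ i, u i * r * v i * s := by rw [Finset.sum_mul]
    _ = ∑ i, u i * v i * (s * r) := Finset.sum_congr rfl fun i _ => by
        have hvs : v i * s ∈ 𝒜 0 := memk (hv i) hs h2
        rw [mul_assoc (u i * r), mul_assoc (u i), hc _ hvs]
        simp only [mul_assoc]
    _ = ε * (s * r) := by rw [← Finset.sum_mul, huv]
    _ = s * r := hε1 _ (memk hs hr (add_zero g))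

private lemma gamma_relB (hgg' : g + g' = 0) (hu : ∀ i, u i ∈ 𝒜 g) (hv : ∀ i, v i ∈ 𝒜 g')
    (huv : ∑ i, u i * v i = ε) (hε2 : ∀ s ∈ 𝒜 g', s * ε = s)
    {r : S} (hr : r ∈ 𝒜 0) (hc : ∀ x ∈ 𝒜 0, r * x = x * r)
    {w : S} (hw : w ∈ 𝒜 g') : w * (∑ i, u i * r * v i) = r * w := by
  have h2 : g' + g = 0 := swap_zero hgg'
  calc w * (∑ i, u i * r * v i) = ∑ i, w * (u i * r * v i) := by rw [Finset.mul_sum]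
    _ = ∑ i, r * w * (u i * v i) := Finset.sum_congr rfl fun i _ => by
        have hwu : w * u i ∈ 𝒜 0 := memk hw (hu i) h2
        rw [← mul_assoc w, ← mul_assoc w, ← hc _ hwu]
        simp only [mul_assoc]
    _ = r * (w * ε) := by rw [← Finset.mul_sum, huv, mul_assoc]
    _ = r * w := by rw [hε2 _ hw]

private lemma gamma_absorb (hv : ∀ i, v i ∈ 𝒜 g') (hε2 : ∀ s ∈ 𝒜 g', s * ε = s)
    (t : S) : (∑ i, u i * t * v i) * ε = ∑ i, u i * t * v i := by
  rw [Finset.sum_mul]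
  exact Finset.sum_congr rfl fun i _ => by rw [mul_assoc, hε2 _ (hv i)]

private lemma gamma_central (hgg' : g + g' = 0) (hu : ∀ i, u i ∈ 𝒜 g) (hv : ∀ i, v i ∈ 𝒜 g')
    (huv : ∑ i, u i * v i = ε) (hε1 : ∀ s ∈ 𝒜 g, ε * s = s) (hε2 : ∀ s ∈ 𝒜 g', s * ε = s)
    {r : S} (hr : r ∈ 𝒜 0) (hc : ∀ x ∈ 𝒜 0, r * x = x * r)
    {x : S} (hx : x ∈ 𝒜 0) : (∑ i, u i * r * v i) * x = x * ∑ i, u i * r * v i := by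
  have h2 : g' + g = 0 := swap_zero hgg'
  have step1 : (∑ i, u i * r * v i) * x * ε = (∑ i, u i * r * v i) * x := by
    rw [Finset.sum_mul, Finset.sum_mul]
    refine Finset.sum_congr rfl fun i _ => ?_
    have hvx : v i * x ∈ 𝒜 g' := memk (hv i) hx (add_zero g')
    rw [mul_assoc (u i * r), mul_assoc (u i * r) (v i * x) ε, hε2 _ hvx]
  calc (∑ i, u i * r * v i) * x = (∑ i, u i * r * v i) * x * ε := step1.symm
    _ = ∑ j, (∑ i, u i * r * v i) * (x * u j) * v j := by
        rw [mul_assoc, ← huv, Finset.mul_sum, Finset.mul_sum]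
        exact Finset.sum_congr rfl fun j _ => by
          rw [← mul_assoc x, ← mul_assoc]
    _ = ∑ j, x * u j * r * v j := Finset.sum_congr rfl fun j _ => by
        rw [gamma_relA hgg' hu hv huv hε1 hr hc (memk hx (hu j) (zero_add g))]
    _ = x * ∑ j, u j * r * v j := by
        rw [Finset.mul_sum]
        exact Finset.sum_congr rfl fun j _ => by simp only [mul_assoc]

private lemma gamma_mult (hgg' : g + g' = 0) (hu : ∀ i, u i ∈ 𝒜 g) (hv : ∀ i, v i ∈ 𝒜 g')
    (huv : ∑ i, u i * v i = ε) (hε1 : ∀ s ∈ 𝒜 g, ε * s = s)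
    {r r' : S} (hr : r ∈ 𝒜 0) (hc : ∀ x ∈ 𝒜 0, r * x = x * r) :
    ∑ i, u i * (r * r') * v i = (∑ i, u i * r * v i) * ∑ i, u i * r' * v i := by
  rw [Finset.mul_sum]
  refine (Finset.sum_congr rfl fun j _ => ?_).symm
  rw [← mul_assoc (∑ i, u i * r * v i), ← mul_assoc (∑ i, u i * r * v i),
    gamma_relA hgg' hu hv huv hε1 hr hc (hu j)]
  simp only [mul_assoc]

end Gamma

/-- `γ_g` restricts to a surjective ring homomorphism `Z(R) → Z(R) ε_g` satisfying
`γ_g(r) s = s r` for all `s ∈ S_g`, and further restricts to a ring isomorphism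
`Z(R) ε_{g⁻¹} → Z(R) ε_g`. -/
theorem gamma_restriction [DecidableEq ι] (𝒜 : ι → AddSubgroup S) [GradedRing 𝒜]
    (h : IsEpsilonStronglyGraded 𝒜) (ε : ι → S)
    (hmem : ∀ g : ι, ε g ∈ 𝒜 g * 𝒜 (-g))
    (hid : ∀ g : ι, ∀ s ∈ 𝒜 g, ε g * s = s ∧ s * ε (-g) = s)
    (g : ι) {n : ℕ} (u : Fin n → S) (v : Fin n → S)
    (hu : ∀ i, u i ∈ 𝒜 g) (hv : ∀ i, v i ∈ 𝒜 (-g))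
    (huv : ∑ i, u i * v i = ε g) :
    -- γ_g maps Z(R) into Z(R) ε_g
    (∀ r : S, r ∈ 𝒜 0 → (∀ x ∈ 𝒜 0, r * x = x * r) →
      ((∑ i, u i * r * v i) ∈ 𝒜 0 ∧ (∀ x ∈ 𝒜 0, (∑ i, u i * r * v i) * x = x * ∑ i, u i * r * v i) ∧
        (∑ i, u i * r * v i) * ε g = ∑ i, u i * r * v i)) ∧
    -- γ_g is multiplicative on Z(R) and sends 1 to ε g
    (∀ r r' : S, r ∈ 𝒜 0 → (∀ x ∈ 𝒜 0, r * x = x * r) →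
      r' ∈ 𝒜 0 → (∀ x ∈ 𝒜 0, r' * x = x * r') →
      ∑ i, u i * (r * r') * v i = (∑ i, u i * r * v i) * ∑ i, u i * r' * v i) ∧
    (∑ i, u i * (1 : S) * v i = ε g) ∧
    -- surjectivity onto Z(R) ε_g
    (∀ r : S, r ∈ 𝒜 0 → (∀ x ∈ 𝒜 0, r * x = x * r) →
      ∃ r' : S, r' ∈ 𝒜 0 ∧ (∀ x ∈ 𝒜 0, r' * x = x * r') ∧ ∑ i, u i * r' * v i = r * ε g) ∧
    -- the defining relation γ_g(r) s = s r
    (∀ r : S, r ∈ 𝒜 0 → (∀ x ∈ 𝒜 0, r * x = x * r) →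
      ∀ s ∈ 𝒜 g, (∑ i, u i * r * v i) * s = s * r) ∧
    -- injectivity on Z(R) ε_{g⁻¹}
    (∀ r : S, r ∈ 𝒜 0 → (∀ x ∈ 𝒜 0, r * x = x * r) →
      (∑ i, u i * (r * ε (-g)) * v i) = 0 → r * ε (-g) = 0) := by
  have hgg' : g + -g = 0 := add_neg_cancel g
  have hg'g : -g + g = 0 := neg_add_cancel g
  have hε1 : ∀ s ∈ 𝒜 g, ε g * s = s := fun s hs => (hid g s hs).1
  have hε2 : ∀ s ∈ 𝒜 (-g), s * ε g = s := fun s hs => by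
    simpa using (hid (-g) s hs).2
  have hε1' : ∀ s ∈ 𝒜 (-g), ε (-g) * s = s := fun s hs => (hid (-g) s hs).1
  have hε2' : ∀ s ∈ 𝒜 g, s * ε (-g) = s := fun s hs => (hid g s hs).2
  -- a decomposition of ε (-g)
  obtain ⟨m, a, b, ha, hb0, hab⟩ := decomp_of_mem_mul (hmem (-g))
  have hb : ∀ k, b k ∈ 𝒜 g := fun k => by simpa using hb0 k
  refine ⟨?_, ?_, ?_, ?_, ?_, ?_⟩
  · -- image in Z(R) ε_g
    intro r hr hc
    exact ⟨gamma_mem hgg' hu hv hr, fun x hx => gamma_central hgg' hu hv huv hε1 hε2 hr hc hx,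
      gamma_absorb hv hε2 r⟩
  · intro r r' hr hc hr' hc'
    exact gamma_mult hgg' hu hv huv hε1 hr hc
  · simpa using huv
  · -- surjectivity
    intro r hr hc
    refine ⟨∑ k, a k * r * b k, gamma_mem hg'g ha hb hr,
      fun x hx => gamma_central hg'g ha hb hab hε1' hε2' hr hc hx, ?_⟩
    calc ∑ j, u j * (∑ k, a k * r * b k) * v j
        = ∑ j, (u j * ∑ k, a k * r * b k) * v j := by
          exact Finset.sum_congr rfl fun j _ => rfl
      _ = ∑ j, (r * u j) * v j := Finset.sum_congr rfl fun j _ => by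
          rw [gamma_relB hg'g ha hb hab hε2' hr hc (hu j)]
      _ = r * ε g := by
          rw [← huv, Finset.mul_sum]
          exact Finset.sum_congr rfl fun j _ => by rw [mul_assoc]
  · -- the defining relation
    intro r hr hc s hs
    exact gamma_relA hgg' hu hv huv hε1 hr hc hs
  · -- injectivity
    intro r hr hc h0
    have key : ∑ i, u i * (r * ε (-g)) * v i = ∑ i, u i * r * v i := by
      refine Finset.sum_congr rfl fun i _ => ?_
      rw [← mul_assoc (u i), mul_assoc (u i * r), hε1' _ (hv i)]
    rw [key] at h0
    have hsr : ∀ s ∈ 𝒜 g, s * r = 0 := fun s hs => by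
      rw [← gamma_relA hgg' hu hv huv hε1 hr hc hs, h0, zero_mul]
    have hεg0 : ε (-g) ∈ 𝒜 0 := (h.1 (-g)).1 (hmem (-g))
    calc r * ε (-g) = ε (-g) * r := hc _ hεg0
      _ = (∑ k, a k * b k) * r := by rw [hab]
      _ = ∑ k, a k * (b k * r) := by
          rw [Finset.sum_mul]
          exact Finset.sum_congr rfl fun k _ => by rw [mul_assoc]
      _ = 0 := by
          refine Finset.sum_eq_zero fun k _ => ?_
          rw [hsr _ (hb k), mul_zero]
end

section
/- Let S be epsilon-strongly graded by a group G with R = S_e. If there exists c ∈ Z(R) with c ε_g = 0 for all but finitely many g ∈ G and Σ_{g∈G} γ_g(c) = 1, then the ring extension S/R is separable, i.e. the multiplication map S ⊗_R S → S admits a separability element x with m(x) = 1 and s x = x s for all s ∈ S. -/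
open Pointwise

variable {S : Type*} [Ring S] {ι : Type*} [AddGroup ι]

universe u

/-- `(a, b)` encodes a separability element `Σᵢ aᵢ ⊗ bᵢ ∈ S ⊗_R S` for the extension `S/R`:
`Σᵢ aᵢ bᵢ = 1` and `s • x = x • s` for all `s ∈ S`, the tensor equality being expressed via
all `R`-balanced biadditive maps into abelian groups. -/
def IsSepElt {S : Type*} [Ring S] (R : AddSubgroup S) {n : ℕ} (a b : Fin n → S) : Prop :=
  (∑ i, a i * b i) = 1 ∧
    ∀ (M : Type u) [AddCommGroup M] (φ : S → S → M),
      (∀ x x' y : S, φ (x + x') y = φ x y + φ x' y) →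
      (∀ x y y' : S, φ x (y + y') = φ x y + φ x y') →
      (∀ r ∈ R, ∀ x y : S, φ (x * r) y = φ x (r * y)) →
      ∀ s : S, (∑ i, φ (s * a i) (b i)) = ∑ i, φ (a i) (b i * s)

/-- The ring extension `S/R` is separable: there exists a separability element. -/
def IsSepExt {S : Type*} [Ring S] (R : AddSubgroup S) : Prop :=
  ∃ (n : ℕ) (a b : Fin n → S), IsSepElt.{u} R a b

lemma sigma_sum_eq {ι : Type*} (Fs : Finset ι) (N : ι → ℕ) {M : Type*} [AddCommMonoid M]
    (F : ∀ k : ι, Fin (N k) → M) :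
    (∑ x : (k : Fs) × Fin (N ↑k), F ↑x.1 x.2) = ∑ k ∈ Fs, ∑ j, F k j := by
  rw [← Finset.sum_coe_sort Fs (fun k => ∑ j, F k j), ← Finset.univ_sigma_univ,
    Finset.sum_sigma]

set_option maxHeartbeats 2000000 in
/-- If there is `c ∈ Z(R)` with `c ε_g = 0` for all but finitely many `g` and
`Σ_g γ_g(c) = 1`, then the extension `S/R` is separable. -/
theorem separable_of_trace_one [DecidableEq ι] (𝒜 : ι → AddSubgroup S) [GradedRing 𝒜]
    (h : IsEpsilonStronglyGraded 𝒜) (ε : ι → S)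
    (hmem : ∀ g : ι, ε g ∈ 𝒜 g * 𝒜 (-g))
    (hid : ∀ g : ι, ∀ s ∈ 𝒜 g, ε g * s = s ∧ s * ε (-g) = s)
    (γ : ι → S → S)
    (hγ : ∀ g : ι, ∃ (n : ℕ) (u v : Fin n → S), (∀ i, u i ∈ 𝒜 g) ∧ (∀ i, v i ∈ 𝒜 (-g)) ∧
      (∑ i, u i * v i = ε g) ∧ ∀ s : S, γ g s = ∑ i, u i * s * v i)
    (c : S) (hc : c ∈ 𝒜 0) (hcc : ∀ x ∈ 𝒜 0, c * x = x * c)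
    (hfin : {g : ι | c * ε g ≠ 0}.Finite)
    (htr : ∑ᶠ g : ι, γ g c = 1) :
    IsSepExt.{u} (𝒜 0) := by
  classical
  choose N U V hU hV hUV hγf using hγ
  have hε0 : ∀ g : ι, ε g ∈ 𝒜 0 := by
    intro g
    rw [← hUV g]
    refine AddSubgroup.sum_mem _ fun j _ => ?_
    have h0 := SetLike.mul_mem_graded (hU g j) (hV g j)
    rwa [add_neg_cancel] at h0
  set Fs : Finset ι := hfin.toFinset.image (fun g => -g) with hFs
  have hout : ∀ k, k ∉ Fs → c * ε (-k) = 0 := by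
    intro k hk
    by_contra h0
    exact hk (Finset.mem_image.2 ⟨-k, hfin.mem_toFinset.2 h0, neg_neg k⟩)
  have hUc : ∀ k, k ∉ Fs → ∀ j, U k j * c = 0 := by
    intro k hk j
    have h1 : U k j * ε (-k) = U k j := (hid k (U k j) (hU k j)).2
    have h2 : c * ε (-k) = ε (-k) * c := hcc _ (hε0 (-k))
    calc U k j * c = U k j * (ε (-k) * c) := by rw [← mul_assoc, h1]
      _ = U k j * (c * ε (-k)) := by rw [h2]
      _ = 0 := by rw [hout k hk, mul_zero]
  have htr' : (∑ k ∈ Fs, ∑ j, (U k j * c) * V k j) = 1 := by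
    have h1 : (∑ k ∈ Fs, γ k c) = 1 := by
      rw [← htr]
      refine (finsum_eq_finset_sum_of_support_subset _ fun k hk => ?_).symm
      by_contra h0
      refine hk ?_
      show γ k c = 0
      rw [hγf k c]
      exact Finset.sum_eq_zero fun j _ => by
        rw [hUc k (by simpa using h0) j, zero_mul]
    rw [← h1]
    refine Finset.sum_congr rfl fun k _ => ?_
    rw [hγf k c]
  -- the main commuting identity
  have main : ∀ (M : Type u) [AddCommGroup M] (φ : S → S → M),
      (∀ x x' y : S, φ (x + x') y = φ x y + φ x' y) →
      (∀ x y y' : S, φ x (y + y') = φ x y + φ x y') →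
      (∀ r ∈ 𝒜 0, ∀ x y : S, φ (x * r) y = φ x (r * y)) →
      ∀ s : S, (∑ k ∈ Fs, ∑ j, φ (s * (U k j * c)) (V k j))
        = ∑ k ∈ Fs, ∑ j, φ (U k j * c) (V k j * s) := by
    intro M _ φ hadd1 hadd2 hbal
    have hφ0l : ∀ y, φ 0 y = 0 := by
      intro y
      have h0 := hadd1 0 0 y
      rw [add_zero] at h0
      exact left_eq_add.mp h0
    have hφ0r : ∀ x, φ x 0 = 0 := by
      intro x
      have h0 := hadd2 x 0 0
      rw [add_zero] at h0
      exact left_eq_add.mp h0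
    have hsum2 : ∀ (x : S) {A : Type} (t : Finset A) (f : A → S),
        φ x (∑ i ∈ t, f i) = ∑ i ∈ t, φ x (f i) := by
      intro x A t f
      exact map_sum (AddMonoidHom.mk' (φ x) (hadd2 x)) f t
    have hsum1 : ∀ (y : S) {A : Type} (t : Finset A) (f : A → S),
        φ (∑ i ∈ t, f i) y = ∑ i ∈ t, φ (f i) y := by
      intro y A t f
      exact map_sum (AddMonoidHom.mk' (fun x => φ x y) (fun a b => hadd1 a b y)) f t
    have key : ∀ (hdeg : ι) (s : S), s ∈ 𝒜 hdeg →
        (∑ k ∈ Fs, ∑ j, φ (s * (U k j * c)) (V k j))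
          = ∑ k ∈ Fs, ∑ j, φ (U k j * c) (V k j * s) := by
      intro hdeg s hs
      have step1 : ∀ g : ι, (∑ i, φ (s * (U g i * c)) (V g i))
          = ∑ j, φ (U (hdeg + g) j * c) (V (hdeg + g) j * s) := by
        intro g
        have hsu : ∀ i, s * U g i ∈ 𝒜 (hdeg + g) := fun i =>
          SetLike.mul_mem_graded hs (hU g i)
        have hr : ∀ (j : Fin (N (hdeg + g))) (i : Fin (N g)),
            V (hdeg + g) j * (s * U g i) ∈ 𝒜 0 := by
          intro j i
          have h0 := SetLike.mul_mem_graded (hV (hdeg + g) j) (hsu i)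
          rwa [neg_add_cancel] at h0
        have hvs : ∀ j : Fin (N (hdeg + g)), V (hdeg + g) j * s ∈ 𝒜 (-g) := by
          intro j
          have h0 := SetLike.mul_mem_graded (hV (hdeg + g) j) hs
          rwa [neg_add_rev, add_assoc, neg_add_cancel, add_zero] at h0
        have hexp : ∀ i, s * U g i
            = ∑ j, U (hdeg + g) j * (V (hdeg + g) j * (s * U g i)) := by
          intro i
          conv_lhs => rw [← (hid (hdeg + g) _ (hsu i)).1, ← hUV (hdeg + g), Finset.sum_mul]
          exact Finset.sum_congr rfl fun j _ => by rw [mul_assoc]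
        have per_i : ∀ i, φ (s * (U g i * c)) (V g i)
            = ∑ j, φ (U (hdeg + g) j * c)
                ((V (hdeg + g) j * (s * U g i)) * V g i) := by
          intro i
          have e1 : s * (U g i * c)
              = ∑ j, (U (hdeg + g) j * c) * (V (hdeg + g) j * (s * U g i)) := by
            conv_lhs => rw [← mul_assoc, hexp i, Finset.sum_mul]
            refine Finset.sum_congr rfl fun j _ => ?_
            rw [mul_assoc, ← hcc _ (hr j i), ← mul_assoc]
          rw [e1, hsum1]
          exact Finset.sum_congr rfl fun j _ => hbal _ (hr j i) _ _
        calc (∑ i, φ (s * (U g i * c)) (V g i))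
            = ∑ i, ∑ j, φ (U (hdeg + g) j * c)
                ((V (hdeg + g) j * (s * U g i)) * V g i) :=
              Finset.sum_congr rfl fun i _ => per_i i
          _ = ∑ j, ∑ i, φ (U (hdeg + g) j * c)
                ((V (hdeg + g) j * (s * U g i)) * V g i) := Finset.sum_comm
          _ = ∑ j, φ (U (hdeg + g) j * c) (V (hdeg + g) j * s) := by
              refine Finset.sum_congr rfl fun j _ => ?_
              rw [← hsum2]
              congr 1
              have e3 : ∀ i, (V (hdeg + g) j * (s * U g i)) * V g i
                  = (V (hdeg + g) j * s) * (U g i * V g i) := by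
                intro i
                simp only [mul_assoc]
              rw [Finset.sum_congr rfl fun i _ => e3 i, ← Finset.mul_sum, hUV g]
              have h4 := (hid (-g) _ (hvs j)).2
              rwa [neg_neg] at h4
      have step2 : ∀ k : ι, (-hdeg + k) ∉ Fs →
          (∑ j, φ (U k j * c) (V k j * s)) = 0 := by
        intro k hk
        have hvs : ∀ j : Fin (N k), V k j * s ∈ 𝒜 (-k + hdeg) := fun j =>
          SetLike.mul_mem_graded (hV k j) hs
        have hz : c * ε (-k + hdeg) = 0 := by
          have h0 := hout _ hk
          rwa [neg_add_rev, neg_neg] at h0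
        refine Finset.sum_eq_zero fun j _ => ?_
        rw [hbal c hc]
        have e2 : c * (V k j * s) = 0 := by
          conv_lhs => rw [← (hid (-k + hdeg) _ (hvs j)).1, ← mul_assoc, hz, zero_mul]
        rw [e2, hφ0r]
      have step3 : ∀ k, k ∉ Fs → (∑ j, φ (U k j * c) (V k j * s)) = 0 := by
        intro k hk
        exact Finset.sum_eq_zero fun j _ => by rw [hUc k hk j, hφ0l]
      calc (∑ k ∈ Fs, ∑ j, φ (s * (U k j * c)) (V k j))
          = ∑ g ∈ Fs, ∑ j, φ (U (hdeg + g) j * c) (V (hdeg + g) j * s) :=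
            Finset.sum_congr rfl fun g _ => step1 g
        _ = ∑ k ∈ Fs.image (fun g => hdeg + g), ∑ j, φ (U k j * c) (V k j * s) :=
            (Finset.sum_image (f := fun k => ∑ j, φ (U k j * c) (V k j * s))
              (g := fun g => hdeg + g) (s := Fs)
              (fun a _ b _ hab => add_left_cancel hab)).symm
        _ = ∑ k ∈ Fs.image (fun g => hdeg + g) ∪ Fs, ∑ j, φ (U k j * c) (V k j * s) := by
            refine Finset.sum_subset Finset.subset_union_left fun x _ hx => ?_
            refine step2 x fun hmem2 => hx ?_
            exact Finset.mem_image.2 ⟨-hdeg + x, hmem2, by rw [add_neg_cancel_left]⟩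
        _ = ∑ k ∈ Fs, ∑ j, φ (U k j * c) (V k j * s) :=
            (Finset.sum_subset Finset.subset_union_right fun x _ hx => step3 x hx).symm
    refine DirectSum.Decomposition.inductionOn 𝒜 ?_ (fun {hdeg} m => key hdeg ↑m m.2) ?_
    · -- zero
      simp [hφ0l, hφ0r]
    · -- additive
      intro x y hx hy
      have l1 : ∀ k ∈ Fs, ∀ j : Fin (N k),
          φ ((x + y) * (U k j * c)) (V k j)
            = φ (x * (U k j * c)) (V k j) + φ (y * (U k j * c)) (V k j) := by
        intro k _ j
        rw [add_mul, hadd1]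
      have l2 : ∀ k ∈ Fs, ∀ j : Fin (N k),
          φ (U k j * c) (V k j * (x + y))
            = φ (U k j * c) (V k j * x) + φ (U k j * c) (V k j * y) := by
        intro k _ j
        rw [mul_add, hadd2]
      calc (∑ k ∈ Fs, ∑ j, φ ((x + y) * (U k j * c)) (V k j))
          = ∑ k ∈ Fs, ∑ j, (φ (x * (U k j * c)) (V k j) + φ (y * (U k j * c)) (V k j)) := by
            refine Finset.sum_congr rfl fun k hk => Finset.sum_congr rfl fun j _ => l1 k hk j
        _ = (∑ k ∈ Fs, ∑ j, φ (x * (U k j * c)) (V k j))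
              + ∑ k ∈ Fs, ∑ j, φ (y * (U k j * c)) (V k j) := by
            simp [Finset.sum_add_distrib]
        _ = (∑ k ∈ Fs, ∑ j, φ (U k j * c) (V k j * x))
              + ∑ k ∈ Fs, ∑ j, φ (U k j * c) (V k j * y) := by rw [hx, hy]
        _ = ∑ k ∈ Fs, ∑ j, φ (U k j * c) (V k j * (x + y)) := by
            rw [← Finset.sum_add_distrib]
            refine Finset.sum_congr rfl fun k hk => ?_
            rw [← Finset.sum_add_distrib]
            exact (Finset.sum_congr rfl fun j _ => (l2 k hk j).symm)
  -- assemble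
  refine ⟨Fintype.card ((k : Fs) × Fin (N ↑k)),
    fun i => U ↑((Fintype.equivFin _).symm i).1 ((Fintype.equivFin _).symm i).2 * c,
    fun i => V ↑((Fintype.equivFin _).symm i).1 ((Fintype.equivFin _).symm i).2, ?_, ?_⟩
  · rw [Equiv.sum_comp (Fintype.equivFin ((k : Fs) × Fin (N ↑k))).symm
      (fun x : (k : Fs) × Fin (N ↑k) => (U ↑x.1 x.2 * c) * V ↑x.1 x.2)]
    rw [sigma_sum_eq Fs N (fun k j => (U k j * c) * V k j)]
    exact htr'
  · intro M _ φ hadd1 hadd2 hbal s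
    rw [Equiv.sum_comp (Fintype.equivFin ((k : Fs) × Fin (N ↑k))).symm
      (fun x : (k : Fs) × Fin (N ↑k) => φ (s * (U ↑x.1 x.2 * c)) (V ↑x.1 x.2))]
    rw [Equiv.sum_comp (Fintype.equivFin ((k : Fs) × Fin (N ↑k))).symm
      (fun x : (k : Fs) × Fin (N ↑k) => φ (U ↑x.1 x.2 * c) (V ↑x.1 x.2 * s))]
    rw [sigma_sum_eq Fs N (fun k j => φ (s * (U k j * c)) (V k j))]
    rw [sigma_sum_eq Fs N (fun k j => φ (U k j * c) (V k j * s))]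
    exact main M φ hadd1 hadd2 hbal s
end

section
/- Let S be epsilon-strongly graded by a group G with R = S_e. If the ring extension S/R is separable, then there exists c ∈ Z(R) with c ε_g = 0 for all but finitely many g ∈ G and Σ_{g∈G} γ_g(c) = 1. -/
open Pointwise

variable {S : Type*} [Ring S] {ι : Type*} [AddGroup ι]

universe u

private lemma up_sum {M : Type*} [AddCommMonoid M] {κ : Type*} (s : Finset κ) (f : κ → M) :
    (∑ i ∈ s, ULift.up.{u} (f i)) = ULift.up (∑ i ∈ s, f i) := by
  classical
  induction s using Finset.cons_induction with
  | empty => rfl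
  | cons a s ha ih => rw [Finset.sum_cons, Finset.sum_cons, ih]; rfl

theorem sepElt_apply {S : Type*} [Ring S] {R : AddSubgroup S} {n : ℕ} {a b : Fin n → S}
    (h : IsSepElt.{u} R a b) (ψ : S → S → S)
    (h1 : ∀ x x' y : S, ψ (x + x') y = ψ x y + ψ x' y)
    (h2 : ∀ x y y' : S, ψ x (y + y') = ψ x y + ψ x y')
    (h3 : ∀ r ∈ R, ∀ x y : S, ψ (x * r) y = ψ x (r * y)) (s : S) :
    (∑ i, ψ (s * a i) (b i)) = ∑ i, ψ (a i) (b i * s) := by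
  by_contra hne
  obtain ⟨c, hc⟩ := CharacterModule.exists_character_apply_ne_zero_of_ne_zero
    (sub_ne_zero_of_ne hne)
  have key := h.2 (ULift.{u} (AddCircle (1 : ℚ)))
    (fun x y => ULift.up (c (ψ x y)))
    (fun x x' y => by show ULift.up (c (ψ (x + x') y)) = _; rw [h1, map_add]; rfl)
    (fun x y y' => by show ULift.up (c (ψ x (y + y'))) = _; rw [h2, map_add]; rfl)
    (fun r hr x y => by show ULift.up (c (ψ (x * r) y)) = _; rw [h3 r hr]) s
  rw [up_sum, up_sum] at key
  have k3 := congrArg ULift.down key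
  apply hc
  rw [map_sub, sub_eq_zero, map_sum, map_sum]
  exact k3

private lemma decompose_coe_sum {S : Type*} [Ring S] {ι : Type*} [DecidableEq ι] [AddGroup ι]
    (𝒜 : ι → AddSubgroup S) [GradedRing 𝒜] {κ : Type*} (s : Finset κ) (f : κ → S) (k : ι) :
    (DirectSum.decompose 𝒜 (∑ x ∈ s, f x) k : S)
      = ∑ x ∈ s, (DirectSum.decompose 𝒜 (f x) k : S) := by
  classical
  induction s using Finset.cons_induction with
  | empty => simp
  | cons a s ha ih =>
    rw [Finset.sum_cons, Finset.sum_cons, DirectSum.decompose_add, ← ih]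
    simp

private lemma decompose_coe_mul_left {S : Type*} [Ring S] {ι : Type*} [DecidableEq ι]
    [AddGroup ι] (𝒜 : ι → AddSubgroup S) [GradedRing 𝒜] {m : ι} {w : S} (hw : w ∈ 𝒜 m)
    (x : S) (k : ι) :
    (DirectSum.decompose 𝒜 (w * x) k : S) = w * (DirectSum.decompose 𝒜 x (-m + k) : S) := by
  lift w to 𝒜 m using hw
  rw [DirectSum.decompose_mul, DirectSum.decompose_coe]
  exact DirectSum.coe_of_mul_apply_aux 𝒜 w _ fun y =>
    ⟨fun hy => by rw [← hy, neg_add_cancel_left], fun hy => by rw [hy, add_neg_cancel_left]⟩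

private lemma decompose_coe_mul_right {S : Type*} [Ring S] {ι : Type*} [DecidableEq ι]
    [AddGroup ι] (𝒜 : ι → AddSubgroup S) [GradedRing 𝒜] {m : ι} {w : S} (hw : w ∈ 𝒜 m)
    (x : S) (k : ι) :
    (DirectSum.decompose 𝒜 (x * w) k : S) = (DirectSum.decompose 𝒜 x (k - m) : S) * w := by
  lift w to 𝒜 m using hw
  rw [DirectSum.decompose_mul, DirectSum.decompose_coe]
  exact DirectSum.coe_mul_of_apply_aux 𝒜 _ w fun y => eq_sub_iff_add_eq.symm

/-- If the extension `S/R` is separable, then there is `c ∈ Z(R)` with `c ε_g = 0` for all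
but finitely many `g` and `Σ_g γ_g(c) = 1`. -/
theorem trace_one_of_separable [DecidableEq ι] (𝒜 : ι → AddSubgroup S) [GradedRing 𝒜]
    (h : IsEpsilonStronglyGraded 𝒜) (ε : ι → S)
    (hmem : ∀ g : ι, ε g ∈ 𝒜 g * 𝒜 (-g))
    (hid : ∀ g : ι, ∀ s ∈ 𝒜 g, ε g * s = s ∧ s * ε (-g) = s)
    (γ : ι → S → S)
    (hγ : ∀ g : ι, ∃ (n : ℕ) (u v : Fin n → S), (∀ i, u i ∈ 𝒜 g) ∧ (∀ i, v i ∈ 𝒜 (-g)) ∧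
      (∑ i, u i * v i = ε g) ∧ ∀ s : S, γ g s = ∑ i, u i * s * v i)
    (hsep : IsSepExt.{u} (𝒜 0)) :
    ∃ c : S, c ∈ 𝒜 0 ∧ (∀ x ∈ 𝒜 0, c * x = x * c) ∧
      {g : ι | c * ε g ≠ 0}.Finite ∧ ∑ᶠ g : ι, γ g c = 1 := by
  classical
  obtain ⟨n, a, b, hab⟩ := hsep
  set D : ι → S → S := fun k x => (DirectSum.decompose 𝒜 x k : S) with hDdef
  have hDmem : ∀ (k : ι) (x : S), D k x ∈ 𝒜 k := fun k x => SetLike.coe_mem _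
  have hDL : ∀ {m : ι} {w : S}, w ∈ 𝒜 m → ∀ (x : S) (k : ι),
      D k (w * x) = w * D (-m + k) x := fun hw x k => decompose_coe_mul_left 𝒜 hw x k
  have hDR : ∀ {m : ι} {w : S}, w ∈ 𝒜 m → ∀ (x : S) (k : ι),
      D k (x * w) = D (k - m) x * w := fun hw x k => decompose_coe_mul_right 𝒜 hw x k
  have hDadd : ∀ (k : ι) (x y : S), D k (x + y) = D k x + D k y := by
    intro k x y
    show (DirectSum.decompose 𝒜 (x + y) k : S) = _
    rw [DirectSum.decompose_add]
    rfl
  have KEY : ∀ (g k : ι) (s : S),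
      (∑ i, D g (s * a i) * D k (b i)) = ∑ i, D g (a i) * D k (b i * s) := by
    intro g k s
    refine sepElt_apply hab (fun x y => D g x * D k y) ?_ ?_ ?_ s
    · intro x x' y
      show D g (x + x') * D k y = D g x * D k y + D g x' * D k y
      rw [hDadd, add_mul]
    · intro x y y'
      show D g x * D k (y + y') = D g x * D k y + D g x * D k y'
      rw [hDadd, mul_add]
    · intro r hr x y
      show D g (x * r) * D k y = D g x * D k (r * y)
      rw [hDR hr, hDL hr, sub_zero, neg_zero, zero_add, mul_assoc]
  set c : S := ∑ i, D 0 (a i) * D 0 (b i) with hcdef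
  have hcmem : c ∈ 𝒜 0 := by
    rw [hcdef]
    exact sum_mem fun i _ => by
      simpa using SetLike.mul_mem_graded (hDmem 0 (a i)) (hDmem 0 (b i))
  have hcomm : ∀ x ∈ 𝒜 0, c * x = x * c := by
    intro r hr
    calc c * r = ∑ i, D 0 (a i) * D 0 (b i * r) := by
          rw [hcdef, Finset.sum_mul]
          exact Finset.sum_congr rfl fun i _ => by rw [hDR hr, sub_zero, mul_assoc]
      _ = ∑ i, D 0 (r * a i) * D 0 (b i) := (KEY 0 0 r).symm
      _ = r * c := by
          rw [hcdef, Finset.mul_sum]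
          exact Finset.sum_congr rfl fun i _ => by
            rw [hDL hr, neg_zero, zero_add, mul_assoc]
  set T : ι → S := fun g => ∑ i, D g (a i) * D (-g) (b i) with hTdef
  have hG1 : ∀ g : ι, γ g c = T g := by
    intro g
    obtain ⟨m, u, v, hu, hv, huv, hγg⟩ := hγ g
    have stepA : ∀ j, c * v j = ∑ i, v j * (D g (a i) * D (-g) (b i)) := by
      intro j
      calc c * v j = ∑ i, D 0 (a i) * D (-g) (b i * v j) := by
            rw [hcdef, Finset.sum_mul]
            exact Finset.sum_congr rfl fun i _ => by rw [hDR (hv j), sub_self, mul_assoc]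
        _ = ∑ i, D 0 (v j * a i) * D (-g) (b i) := (KEY 0 (-g) (v j)).symm
        _ = ∑ i, v j * (D g (a i) * D (-g) (b i)) :=
            Finset.sum_congr rfl fun i _ => by
              rw [hDL (hv j), neg_neg, add_zero, mul_assoc]
    calc γ g c = ∑ j, u j * c * v j := hγg c
      _ = ∑ j, ∑ i, (u j * v j) * (D g (a i) * D (-g) (b i)) := by
          refine Finset.sum_congr rfl fun j _ => ?_
          rw [mul_assoc, stepA j, Finset.mul_sum]
          exact Finset.sum_congr rfl fun i _ => by rw [← mul_assoc, ← mul_assoc]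
      _ = ∑ i, (∑ j, u j * v j) * (D g (a i) * D (-g) (b i)) := by
          rw [Finset.sum_comm]
          exact Finset.sum_congr rfl fun i _ => (Finset.sum_mul _ _ _).symm
      _ = T g := by
          rw [huv]
          simp only [hTdef]
          exact Finset.sum_congr rfl fun i _ => by
            rw [← mul_assoc, (hid g _ (hDmem g (a i))).1]
  have stepC : ∀ (g : ι) (w : S), w ∈ 𝒜 g → c * w = w * T (-g) := by
    intro g w hw
    calc c * w = ∑ i, D 0 (a i) * D g (b i * w) := by
          rw [hcdef, Finset.sum_mul]
          exact Finset.sum_congr rfl fun i _ => by rw [hDR hw, sub_self, mul_assoc]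
      _ = ∑ i, D 0 (w * a i) * D g (b i) := (KEY 0 g w).symm
      _ = w * T (-g) := by
          simp only [hTdef, neg_neg, Finset.mul_sum]
          exact Finset.sum_congr rfl fun i _ => by
            rw [hDL hw, add_zero, mul_assoc]
  set F : Finset ι := Finset.univ.biUnion
    (fun i : Fin n => (DirectSum.decompose 𝒜 (a i)).support) with hFdef
  have hTzero : ∀ g : ι, g ∉ F → T g = 0 := by
    intro g hg
    simp only [hFdef, Finset.mem_biUnion, Finset.mem_univ, true_and, not_exists] at hg
    simp only [hTdef]
    refine Finset.sum_eq_zero fun i _ => ?_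
    have hz : D g (a i) = 0 := by
      show (DirectSum.decompose 𝒜 (a i) g : S) = 0
      rw [DFinsupp.notMem_support_iff.mp (hg i)]
      rfl
    rw [hz, zero_mul]
  have hfinT : {g : ι | T g ≠ 0}.Finite := by
    apply Set.Finite.subset F.finite_toSet
    intro g hg
    simp only [Set.mem_setOf_eq] at hg
    by_contra h'
    exact hg (hTzero g h')
  have hfin : {g : ι | c * ε g ≠ 0}.Finite := by
    have hsub : {g : ι | c * ε g ≠ 0} ⊆ (fun g : ι => -g) ⁻¹' {g : ι | T g ≠ 0} := by
      intro g hg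
      simp only [Set.mem_setOf_eq, Set.mem_preimage] at hg ⊢
      intro hT
      apply hg
      obtain ⟨m, u, v, hu, hv, huv, hγg⟩ := hγ g
      rw [← huv, Finset.mul_sum]
      refine Finset.sum_eq_zero fun j _ => ?_
      rw [← mul_assoc, stepC g (u j) (hu j), hT, mul_zero, zero_mul]
    exact Set.Finite.subset (Set.Finite.preimage (neg_injective.injOn) hfinT) hsub
  refine ⟨c, hcmem, hcomm, hfin, ?_⟩
  have hsuppsub : Function.support (fun g : ι => γ g c) ⊆ ↑F := by
    intro g hg
    rw [Function.mem_support] at hg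
    by_contra h'
    exact hg (by rw [hG1 g, hTzero g h'])
  rw [finsum_eq_sum_of_support_subset _ hsuppsub]
  have h2 : ∀ i : Fin n, ∑ g ∈ F, D g (a i) * D (-g) (b i) = D 0 (a i * b i) := by
    intro i
    have hsub : (DirectSum.decompose 𝒜 (a i)).support ⊆ F := fun g hg =>
      Finset.mem_biUnion.mpr ⟨i, Finset.mem_univ i, hg⟩
    have hai : ∑ g ∈ F, D g (a i) = a i := by
      conv_rhs => rw [← DirectSum.sum_support_decompose 𝒜 (a i)]
      exact (Finset.sum_subset hsub fun g _ hg => by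
        show (DirectSum.decompose 𝒜 (a i) g : S) = 0
        rw [DFinsupp.notMem_support_iff.mp hg]
        rfl).symm
    calc ∑ g ∈ F, D g (a i) * D (-g) (b i)
        = ∑ g ∈ F, D 0 (D g (a i) * b i) := Finset.sum_congr rfl fun g _ => by
            rw [hDL (hDmem g (a i)), add_zero]
      _ = D 0 ((∑ g ∈ F, D g (a i)) * b i) := by
          rw [Finset.sum_mul]
          exact (decompose_coe_sum 𝒜 F _ 0).symm
      _ = D 0 (a i * b i) := by rw [hai]
  calc ∑ g ∈ F, γ g c = ∑ g ∈ F, T g := Finset.sum_congr rfl fun g _ => hG1 g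
    _ = ∑ i, ∑ g ∈ F, D g (a i) * D (-g) (b i) := by
        simp only [hTdef]
        exact Finset.sum_comm
    _ = ∑ i, D 0 (a i * b i) := Finset.sum_congr rfl fun i _ => h2 i
    _ = D 0 (∑ i, a i * b i) := (decompose_coe_sum 𝒜 Finset.univ _ 0).symm
    _ = 1 := by
        rw [hab.1]
        exact DirectSum.decompose_of_mem_same 𝒜 (SetLike.one_mem_graded 𝒜)
end

section
/- Let S be epsilon-strongly graded by a group G with R = S_e. The trace map tr_γ : Z(R)_fin → Z(R), tr_γ(r) = Σ_{g∈G} γ_g(r), takes values in the set Z(R)_fin^γ of elements r ∈ Z(R)_fin with γ_g(r) = r ε_g for all g ∈ G, and tr_γ is a Z(R)_fin^γ-bimodule homomorphism: tr_γ(r' r r'') = r' tr_γ(r) r'' for r ∈ Z(R)_fin and r', r'' ∈ Z(R)_fin^γ. -/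
open Pointwise

variable {S : Type*} [Ring S] {ι : Type*} [AddGroup ι]

/-- The set `Z(R)_fin` of central elements `r` of `R = S_e` with `r ε_g = 0` for all but
finitely many `g`. -/
def ZFin (𝒜 : ι → AddSubgroup S) (ε : ι → S) : Set S :=
  {r | (r ∈ 𝒜 0 ∧ ∀ x ∈ 𝒜 0, r * x = x * r) ∧ {g : ι | r * ε g ≠ 0}.Finite}

/-- The trace map `tr_γ(r) = Σ_g γ_g(r)` maps `Z(R)_fin` into `Z(R)_fin^γ`
(the elements `r` of `Z(R)_fin` with `γ_g(r) = r ε_g` for all `g`), and it is a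
`Z(R)_fin^γ`-bimodule homomorphism. -/
theorem trace_into_invariants_and_bimodule [DecidableEq ι]
    (𝒜 : ι → AddSubgroup S) [GradedRing 𝒜]
    (h : IsEpsilonStronglyGraded 𝒜) (ε : ι → S)
    (hmem : ∀ g : ι, ε g ∈ 𝒜 g * 𝒜 (-g))
    (hid : ∀ g : ι, ∀ s ∈ 𝒜 g, ε g * s = s ∧ s * ε (-g) = s)
    (γ : ι → S → S)
    (hγ : ∀ g : ι, ∃ (n : ℕ) (u v : Fin n → S), (∀ i, u i ∈ 𝒜 g) ∧ (∀ i, v i ∈ 𝒜 (-g)) ∧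
      (∑ i, u i * v i = ε g) ∧ ∀ s : S, γ g s = ∑ i, u i * s * v i) :
    (∀ r ∈ ZFin 𝒜 ε, (∑ᶠ g : ι, γ g r) ∈ ZFin 𝒜 ε ∧
      ∀ g : ι, γ g (∑ᶠ g' : ι, γ g' r) = (∑ᶠ g' : ι, γ g' r) * ε g) ∧
    (∀ r ∈ ZFin 𝒜 ε, ∀ r' ∈ ZFin 𝒜 ε, ∀ r'' ∈ ZFin 𝒜 ε,
      (∀ g : ι, γ g r' = r' * ε g) → (∀ g : ι, γ g r'' = r'' * ε g) →
      ∑ᶠ g : ι, γ g (r' * r * r'') = r' * (∑ᶠ g : ι, γ g r) * r'') := by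
  classical
  choose n u v hu hv hsum hexp using hγ
  -- basic identities for the partial units
  have hεu : ∀ g i, ε g * u g i = u g i := fun g i => (hid g _ (hu g i)).1
  have huε : ∀ g i, u g i * ε (-g) = u g i := fun g i => (hid g _ (hu g i)).2
  have hεv : ∀ g i, ε (-g) * v g i = v g i := fun g i => (hid (-g) _ (hv g i)).1
  have hvε : ∀ g i, v g i * ε g = v g i := fun g i => by
    have := (hid (-g) _ (hv g i)).2; rwa [neg_neg] at this
  have h1mem : (1 : S) ∈ 𝒜 0 := SetLike.one_mem_graded 𝒜
  have hε0 : ε 0 = 1 := by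
    have := (hid 0 1 h1mem).1; rwa [mul_one] at this
  have hεmem : ∀ g, ε g ∈ 𝒜 0 := fun g => by
    rw [← hsum g]
    refine sum_mem fun i _ => ?_
    have := SetLike.mul_mem_graded (hu g i) (hv g i)
    rwa [add_neg_cancel] at this
  -- γ g r ∈ 𝒜 0
  have hγmem : ∀ g r, r ∈ 𝒜 0 → γ g r ∈ 𝒜 0 := fun g r hr => by
    rw [hexp]
    refine sum_mem fun i _ => ?_
    have := SetLike.mul_mem_graded (SetLike.mul_mem_graded (hu g i) hr) (hv g i)
    rwa [add_zero, add_neg_cancel] at this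
  -- γ g is additive
  have hγzero : ∀ g, γ g 0 = 0 := fun g => by simp [hexp]
  have hmap : ∀ g (f : ι → S), (Function.support f).Finite →
      γ g (∑ᶠ x, f x) = ∑ᶠ x, γ g (f x) := by
    intro g f hf
    exact AddMonoidHom.map_finsum
      ⟨⟨γ g, by simp [hexp]⟩, fun a b => by
        simp [hexp, mul_add, add_mul, Finset.sum_add_distrib]⟩ hf
  -- vanishing lemma
  have hvanish : ∀ g r, r * ε (-g) = 0 → γ g r = 0 := by
    intro g r h0
    rw [hexp]
    refine Finset.sum_eq_zero fun i _ => ?_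
    have : u g i * r * v g i = u g i * (r * ε (-g)) * v g i := by
      conv_lhs => rw [← hεv g i]
      simp only [mul_assoc]
    rw [this, h0, mul_zero, zero_mul]
  -- Lemma A : γ m r * s = s * r for s ∈ 𝒜 m, r central
  have hA : ∀ m r, (∀ x ∈ 𝒜 0, r * x = x * r) → ∀ s ∈ 𝒜 m, γ m r * s = s * r := by
    intro m r hr s hs
    rw [hexp, Finset.sum_mul]
    have key : ∀ i, u m i * r * v m i * s = u m i * v m i * (s * r) := by
      intro i
      have h1 : v m i * s ∈ 𝒜 0 := by
        have := SetLike.mul_mem_graded (hv m i) hs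
        rwa [neg_add_cancel] at this
      calc u m i * r * v m i * s = u m i * (r * (v m i * s)) := by simp only [mul_assoc]
        _ = u m i * ((v m i * s) * r) := by rw [hr _ h1]
        _ = u m i * v m i * (s * r) := by simp only [mul_assoc]
    rw [Finset.sum_congr rfl fun i _ => key i, ← Finset.sum_mul, hsum, ← mul_assoc,
      (hid m s hs).1]
  -- Lemma A' : t * γ m r = r * t for t ∈ 𝒜 (-m), r central
  have hA' : ∀ m r, (∀ x ∈ 𝒜 0, r * x = x * r) → ∀ t ∈ 𝒜 (-m), t * γ m r = r * t := by
    intro m r hr t ht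
    rw [hexp, Finset.mul_sum]
    have key : ∀ i, t * (u m i * r * v m i) = r * (t * (u m i * v m i)) := by
      intro i
      have h1 : t * u m i ∈ 𝒜 0 := by
        have := SetLike.mul_mem_graded ht (hu m i)
        rwa [neg_add_cancel] at this
      calc t * (u m i * r * v m i) = (t * u m i) * r * v m i := by simp only [mul_assoc]
        _ = r * (t * u m i) * v m i := by rw [← hr _ h1]
        _ = r * (t * (u m i * v m i)) := by simp only [mul_assoc]
    rw [Finset.sum_congr rfl fun i _ => key i, ← Finset.mul_sum, ← Finset.mul_sum, hsum]
    have ht2 : t * ε m = t := by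
      have := (hid (-m) t ht).2; rwa [neg_neg] at this
    rw [ht2]
  -- ε m absorbs γ m r
  have hεγ : ∀ m r, ε m * γ m r = γ m r := by
    intro m r
    rw [hexp, Finset.mul_sum]
    refine Finset.sum_congr rfl fun i _ => ?_
    rw [← mul_assoc, ← mul_assoc, hεu]
  have hγε : ∀ m r, γ m r * ε m = γ m r := by
    intro m r
    rw [hexp, Finset.sum_mul]
    refine Finset.sum_congr rfl fun i _ => ?_
    rw [mul_assoc, hvε]
  -- γ m r is central in 𝒜 0 when r is central
  have hcent : ∀ m r, (∀ x ∈ 𝒜 0, r * x = x * r) → ∀ x ∈ 𝒜 0,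
      γ m r * x = x * γ m r := by
    intro m r hr x hx
    have e1 : x * γ m r = γ m r * x * ε m := by
      have key : ∀ i, x * (u m i * r * v m i) = γ m r * x * (u m i * v m i) := by
        intro i
        have hxu : x * u m i ∈ 𝒜 m := by
          have := SetLike.mul_mem_graded hx (hu m i)
          rwa [zero_add] at this
        have hAa := hA m r hr _ hxu
        calc x * (u m i * r * v m i) = (x * u m i) * r * v m i := by
              simp only [mul_assoc]
          _ = (γ m r * (x * u m i)) * v m i := by rw [hAa]
          _ = γ m r * x * (u m i * v m i) := by simp only [mul_assoc]
      calc x * γ m r = ∑ i, x * (u m i * r * v m i) := by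
            conv_lhs => rw [hexp m r, Finset.mul_sum]
        _ = ∑ i, γ m r * x * (u m i * v m i) := Finset.sum_congr rfl fun i _ => key i
        _ = γ m r * x * ε m := by rw [← Finset.mul_sum, hsum]
    have e2 : γ m r * x = ε m * (x * γ m r) := by
      have key : ∀ i, (u m i * r * v m i) * x = (u m i * v m i) * (x * γ m r) := by
        intro i
        have hvx : v m i * x ∈ 𝒜 (-m) := by
          have := SetLike.mul_mem_graded (hv m i) hx
          rwa [add_zero] at this
        have hAa := hA' m r hr _ hvx
        calc u m i * r * v m i * x = u m i * (r * (v m i * x)) := by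
              simp only [mul_assoc]
          _ = u m i * ((v m i * x) * γ m r) := by rw [← hAa]
          _ = (u m i * v m i) * (x * γ m r) := by simp only [mul_assoc]
      calc γ m r * x = ∑ i, (u m i * r * v m i) * x := by
            conv_lhs => rw [hexp m r, Finset.sum_mul]
        _ = ∑ i, (u m i * v m i) * (x * γ m r) := Finset.sum_congr rfl fun i _ => key i
        _ = ε m * (x * γ m r) := by rw [← Finset.sum_mul, hsum]
    have e3 : γ m r * x = γ m r * x * ε m := by
      calc γ m r * x = ε m * (x * γ m r) := e2
        _ = ε m * (γ m r * x * ε m) := by rw [e1]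
        _ = ε m * γ m r * x * ε m := by simp only [mul_assoc]
        _ = γ m r * x * ε m := by rw [hεγ]
    exact e3.trans e1.symm
  -- the composition rule : γ g (γ h r) = γ (g+h) r * ε g for central r
  have hcomp : ∀ g h' r, (∀ x ∈ 𝒜 0, r * x = x * r) →
      γ g (γ h' r) = γ (g + h') r * ε g := by
    intro g h' r hr
    -- first, γ (g+h') r * (a * ε h') = γ (g+h') r * a for a ∈ 𝒜 g
    have absorb : ∀ a ∈ 𝒜 g, γ (g + h') r * (a * ε h') = γ (g + h') r * a := by
      intro a ha
      rw [hexp (g + h'), Finset.sum_mul, Finset.sum_mul]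
      refine Finset.sum_congr rfl fun k _ => ?_
      have hva : v (g + h') k * a ∈ 𝒜 (-h') := by
        have := SetLike.mul_mem_graded (hv (g + h') k) ha
        rwa [neg_add_rev, add_assoc, neg_add_cancel, add_zero] at this
      have hvae : (v (g + h') k * a) * ε h' = v (g + h') k * a := by
        have := (hid (-h') _ hva).2; rwa [neg_neg] at this
      calc u (g + h') k * r * v (g + h') k * (a * ε h')
          = u (g + h') k * (r * ((v (g + h') k * a) * ε h')) := by simp only [mul_assoc]
        _ = u (g + h') k * (r * (v (g + h') k * a)) := by rw [hvae]
        _ = u (g + h') k * r * v (g + h') k * a := by simp only [mul_assoc]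
    calc γ g (γ h' r)
        = ∑ i, u g i * γ h' r * v g i := hexp g _
      _ = ∑ i, γ (g + h') r * (u g i * ε h' * v g i) := by
          refine Finset.sum_congr rfl fun i _ => ?_
          calc u g i * γ h' r * v g i
              = ∑ j, u g i * (u h' j * r * v h' j) * v g i := by
                conv_lhs => rw [hexp h' r]
                rw [Finset.mul_sum, Finset.sum_mul]
            _ = ∑ j, γ (g + h') r * (u g i * (u h' j * v h' j) * v g i) := by
                refine Finset.sum_congr rfl fun j _ => ?_
                have huu : u g i * u h' j ∈ 𝒜 (g + h') :=
                  SetLike.mul_mem_graded (hu g i) (hu h' j)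
                have hAa := hA (g + h') r hr _ huu
                calc u g i * (u h' j * r * v h' j) * v g i
                    = (u g i * u h' j) * r * (v h' j * v g i) := by simp only [mul_assoc]
                  _ = (γ (g + h') r * (u g i * u h' j)) * (v h' j * v g i) := by rw [hAa]
                  _ = γ (g + h') r * (u g i * (u h' j * v h' j) * v g i) := by
                      simp only [mul_assoc]
            _ = γ (g + h') r * (u g i * ε h' * v g i) := by
                rw [← Finset.mul_sum, ← Finset.sum_mul, ← Finset.mul_sum, hsum]
      _ = ∑ i, γ (g + h') r * (u g i * v g i) := by
          refine Finset.sum_congr rfl fun i _ => ?_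
          have := absorb (u g i) (hu g i)
          calc γ (g + h') r * (u g i * ε h' * v g i)
              = (γ (g + h') r * (u g i * ε h')) * v g i := by simp only [mul_assoc]
            _ = (γ (g + h') r * u g i) * v g i := by rw [this]
            _ = γ (g + h') r * (u g i * v g i) := by simp only [mul_assoc]
      _ = γ (g + h') r * ε g := by rw [← Finset.mul_sum, hsum]
  -- γ 0 is the identity on central elements
  have hγ0id : ∀ r, (∀ x ∈ 𝒜 0, r * x = x * r) → γ 0 r = r := by
    intro r hr
    rw [hexp]
    have : ∀ i, u 0 i * r * v 0 i = r * (u 0 i * v 0 i) := by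
      intro i
      rw [← hr _ (hu 0 i), mul_assoc]
    rw [Finset.sum_congr rfl fun i _ => this i, ← Finset.mul_sum, hsum, hε0, mul_one]
  -- finite support of g ↦ γ g r for r ∈ ZFin
  have hsuppfin : ∀ r : S, ({g : ι | r * ε g ≠ 0}).Finite →
      (Function.support fun g => γ g r).Finite := by
    intro r hrfin
    have hsub : (Function.support fun g => γ g r) ⊆
        (fun g : ι => -g) ⁻¹' {k | r * ε k ≠ 0} := by
      intro g hg
      simp only [Set.mem_preimage, Set.mem_setOf_eq]
      intro h0
      exact hg (hvanish g r h0)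
    exact (hrfin.preimage (neg_injective.injOn)).subset hsub
  constructor
  · -- trace lands in the invariants
    rintro r ⟨⟨hr0, hrc⟩, hrfin⟩
    have hsupp := hsuppfin r hrfin
    set T := ∑ᶠ g : ι, γ g r with hT
    have hT0 : T ∈ 𝒜 0 := by
      rw [hT, finsum_eq_sum _ hsupp]
      exact sum_mem fun i _ => hγmem _ _ hr0
    have hTc : ∀ x ∈ 𝒜 0, T * x = x * T := by
      intro x hx
      rw [hT, finsum_mul' _ _ hsupp, mul_finsum' _ _ hsupp]
      exact finsum_congr fun g => hcent g r hrc x hx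
    have hinv : ∀ g, γ g T = T * ε g := by
      intro g
      have hsupp2 : (Function.support fun h' => γ (g + h') r).Finite := by
        have hsub : (Function.support fun h' => γ (g + h') r) ⊆
            (fun h' : ι => g + h') ⁻¹' (Function.support fun k => γ k r) :=
          fun h' hh' => hh'
        exact (hsupp.preimage ((add_right_injective g).injOn)).subset hsub
      calc γ g T = ∑ᶠ h', γ g (γ h' r) := hmap g _ hsupp
        _ = ∑ᶠ h', γ (g + h') r * ε g := finsum_congr fun h' => hcomp g h' r hrc
        _ = (∑ᶠ h', γ (g + h') r) * ε g := (finsum_mul' _ _ hsupp2).symm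
        _ = T * ε g := by
            rw [hT]
            congr 1
            exact finsum_comp (g := fun k : ι => γ k r) (fun h' : ι => g + h')
              ⟨add_right_injective g, fun b => ⟨-g + b, by simp⟩⟩
    have hTfin : {g : ι | T * ε g ≠ 0}.Finite := by
      have cover : {g : ι | T * ε g ≠ 0} ⊆
          ⋃ h' ∈ (Function.support fun k => γ k r),
            (fun k : ι => h' + k) '' {k | r * ε k ≠ 0} := by
        intro g hg
        simp only [Set.mem_setOf_eq] at hg
        have h1 : γ (-g) T ≠ 0 := by
          intro h0
          apply hg
          have e : γ g (γ (-g) T) = T * ε g := by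
            rw [hcomp g (-g) T hTc, add_neg_cancel, hγ0id T hTc]
          rw [← e, h0, hγzero]
        have h2 : γ (-g) T = ∑ᶠ h', γ (-g) (γ h' r) := hmap (-g) _ hsupp
        have h3 : ∃ h', γ (-g) (γ h' r) ≠ 0 := by
          by_contra hall
          push_neg at hall
          exact h1 (by rw [h2, finsum_eq_zero_of_forall_eq_zero hall])
        obtain ⟨h', hne⟩ := h3
        have h4 : γ h' r ≠ 0 := fun h0 => hne (by rw [h0, hγzero])
        have h5 : γ (-g + h') r ≠ 0 := by
          intro h0
          exact hne (by rw [hcomp (-g) h' r hrc, h0, zero_mul])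
        have h6 : r * ε (-h' + g) ≠ 0 := by
          intro h0
          apply h5
          apply hvanish
          rwa [neg_add_rev, neg_neg]
        exact Set.mem_biUnion h4 ⟨-h' + g, h6, by simp⟩
      exact (hsupp.biUnion fun h' _ => hrfin.image _).subset cover
    exact ⟨⟨⟨hT0, hTc⟩, hTfin⟩, hinv⟩
  · -- bimodule property
    rintro r ⟨⟨hr0, hrc⟩, hrfin⟩ r' ⟨⟨hr'0, hr'c⟩, hr'fin⟩ r'' ⟨⟨hr''0, hr''c⟩, hr''fin⟩
      hir' hir''
    have hsupp := hsuppfin r hrfin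
    have pointwise : ∀ g, γ g (r' * r * r'') = r' * γ g r * r'' := by
      intro g
      have stepa : ∀ i, u g i * r' = r' * u g i := by
        intro i
        have hAa := hA g r' hr'c _ (hu g i)
        rw [hir' g, mul_assoc, hεu] at hAa
        exact hAa.symm
      have stepb : ∀ i, r'' * v g i = v g i * r'' := by
        intro i
        have hAa := hA' g r'' hr''c _ (hv g i)
        rw [hir'' g, hr''c _ (hεmem g), ← mul_assoc, hvε] at hAa
        exact hAa.symm
      rw [hexp, hexp, Finset.mul_sum, Finset.sum_mul]
      refine Finset.sum_congr rfl fun i _ => ?_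
      calc u g i * (r' * r * r'') * v g i
          = (u g i * r') * (r * (r'' * v g i)) := by simp only [mul_assoc]
        _ = (r' * u g i) * (r * (v g i * r'')) := by rw [stepa, stepb]
        _ = r' * (u g i * r * v g i) * r'' := by simp only [mul_assoc]
    have hsupp2 : (Function.support fun g => r' * γ g r).Finite := by
      refine hsupp.subset fun g hg => ?_
      simp only [Function.mem_support] at hg ⊢
      intro h0
      exact hg (by rw [h0, mul_zero])
    calc ∑ᶠ g : ι, γ g (r' * r * r'')
        = ∑ᶠ g : ι, r' * γ g r * r'' := finsum_congr pointwise
      _ = (∑ᶠ g : ι, r' * γ g r) * r'' := (finsum_mul' _ _ hsupp2).symm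
      _ = r' * (∑ᶠ g : ι, γ g r) * r'' := by rw [mul_finsum' _ _ hsupp]
end

section
/- Let S be epsilon-strongly graded by a group G with R = S_e. If I is a non-zero ideal of S, then I ∩ C_S(Z(R)) ≠ {0}, where C_S(Z(R)) is the centralizer in S of the center of R. Consequently, if R is a maximal commutative subring of S (C_S(R) = R), then S is simple if and only if S is graded simple. -/
open Pointwise

variable {S : Type*} [Ring S] {ι : Type*} [AddGroup ι]

lemma decompose_mul_left' [DecidableEq ι] (𝒜 : ι → AddSubgroup S) [GradedRing 𝒜]
    {d : ι} {b : S} (hb : b ∈ 𝒜 d) (y : S) (k : ι) :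
    ((DirectSum.decompose 𝒜 (b * y) k : S)) = b * (DirectSum.decompose 𝒜 y (-d + k) : S) := by
  induction y using DirectSum.Decomposition.inductionOn 𝒜 with
  | zero => simp
  | @homogeneous i m =>
    by_cases hk : k = d + i
    · subst hk
      rw [DirectSum.decompose_of_mem_same 𝒜 (SetLike.mul_mem_graded hb m.2),
          neg_add_cancel_left, DirectSum.decompose_of_mem_same 𝒜 m.2]
    · rw [DirectSum.decompose_of_mem_ne 𝒜 (SetLike.mul_mem_graded hb m.2) (fun hh => hk hh.symm),
          DirectSum.decompose_of_mem_ne 𝒜 m.2 (fun hh => hk (by rw [hh, add_neg_cancel_left])),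
          mul_zero]
  | add m m' hm hm' =>
    rw [mul_add, DirectSum.decompose_add, DirectSum.decompose_add, DirectSum.add_apply,
      DirectSum.add_apply, AddSubgroup.coe_add, AddSubgroup.coe_add, hm, hm', mul_add]

lemma decompose_mul_right' [DecidableEq ι] (𝒜 : ι → AddSubgroup S) [GradedRing 𝒜]
    {d : ι} {b : S} (hb : b ∈ 𝒜 d) (y : S) (k : ι) :
    ((DirectSum.decompose 𝒜 (y * b) k : S)) = (DirectSum.decompose 𝒜 y (k + -d) : S) * b := by
  induction y using DirectSum.Decomposition.inductionOn 𝒜 with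
  | zero => simp
  | @homogeneous i m =>
    by_cases hk : k = i + d
    · subst hk
      rw [DirectSum.decompose_of_mem_same 𝒜 (SetLike.mul_mem_graded m.2 hb),
          add_neg_cancel_right, DirectSum.decompose_of_mem_same 𝒜 m.2]
    · rw [DirectSum.decompose_of_mem_ne 𝒜 (SetLike.mul_mem_graded m.2 hb) (fun hh => hk hh.symm),
          DirectSum.decompose_of_mem_ne 𝒜 m.2 (fun hh => hk (by rw [hh, neg_add_cancel_right])),
          zero_mul]
  | add m m' hm hm' =>
    rw [add_mul, DirectSum.decompose_add, DirectSum.decompose_add, DirectSum.add_apply,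
      DirectSum.add_apply, AddSubgroup.coe_add, AddSubgroup.coe_add, hm, hm', add_mul]

theorem part_one [DecidableEq ι]
    (𝒜 : ι → AddSubgroup S) [GradedRing 𝒜]
    (ε : ι → S)
    (hmem : ∀ g : ι, ε g ∈ 𝒜 g * 𝒜 (-g))
    (hid : ∀ g : ι, ∀ s ∈ 𝒜 g, ε g * s = s ∧ s * ε (-g) = s) :
    (∀ I : AddSubgroup S, (∀ s : S, ∀ x ∈ I, s * x ∈ I ∧ x * s ∈ I) → I ≠ ⊥ →
      ∃ x ∈ I, x ≠ 0 ∧ ∀ z : S, z ∈ 𝒜 0 → (∀ y ∈ 𝒜 0, z * y = y * z) → x * z = z * x) := by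
  classical
  intro I hI hne
  have hex : ∃ y ∈ I, y ≠ 0 := by
    by_contra hc
    push_neg at hc
    exact hne (le_antisymm (fun y hy => (AddSubgroup.mem_bot).2 (hc y hy)) bot_le)
  have hP : ∃ n : ℕ, ∃ y, y ∈ I ∧ y ≠ 0 ∧ (DirectSum.decompose 𝒜 y).support.card = n := by
    obtain ⟨y, hyI, hy⟩ := hex
    exact ⟨_, y, hyI, hy, rfl⟩
  set n := Nat.find hP with hn
  obtain ⟨y, hyI, hy, hycard⟩ := Nat.find_spec hP
  have hsupp : (DirectSum.decompose 𝒜 y).support.Nonempty := by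
    rw [Finset.nonempty_iff_ne_empty]
    intro he
    apply hy
    rw [← DirectSum.sum_support_decompose 𝒜 y, he, Finset.sum_empty]
  obtain ⟨g, hg⟩ := hsupp
  set yg : S := (DirectSum.decompose 𝒜 y g : S) with hyg_def
  have hygmem : yg ∈ 𝒜 g := SetLike.coe_mem _
  have hyg : yg ≠ 0 := by
    intro h0
    exact (DFinsupp.mem_support_iff.1 hg) (Subtype.ext h0)
  obtain ⟨b, hbmem, hb0⟩ : ∃ b ∈ 𝒜 (-g), b * yg ≠ 0 := by
    by_contra hc
    push_neg at hc
    have : ε g * yg = 0 := by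
      refine AddSubmonoid.mul_induction_on (hmem g) (fun m hm o ho => ?_) ?_
      · rw [mul_assoc, hc o ho, mul_zero]
      · intro a c ha hc'
        rw [add_mul, ha, hc', add_zero]
    rw [(hid g yg hygmem).1] at this
    exact hyg this
  set x : S := b * y with hx_def
  have hxI : x ∈ I := (hI b y hyI).1
  have hxcomp : ∀ k, (DirectSum.decompose 𝒜 x k : S) = b * (DirectSum.decompose 𝒜 y (g + k) : S) := by
    intro k
    rw [hx_def, decompose_mul_left' 𝒜 hbmem, neg_neg]
  have hx0 : (DirectSum.decompose 𝒜 x 0 : S) = b * yg := by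
    rw [hxcomp 0, add_zero]
  have hxne : x ≠ 0 := by
    intro h0
    apply hb0
    rw [← hx0, h0]
    simp
  have hx0mem : (0 : ι) ∈ (DirectSum.decompose 𝒜 x).support := by
    rw [DFinsupp.mem_support_iff]
    intro h0
    apply hb0
    rw [← hx0, h0, ZeroMemClass.coe_zero]
  have hsub : (DirectSum.decompose 𝒜 x).support ⊆
      (DirectSum.decompose 𝒜 y).support.image (fun k => -g + k) := by
    intro k hk
    rw [DFinsupp.mem_support_iff] at hk
    rw [Finset.mem_image]
    refine ⟨g + k, ?_, by rw [neg_add_cancel_left]⟩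
    rw [DFinsupp.mem_support_iff]
    intro h0
    apply hk
    apply Subtype.ext
    rw [hxcomp k, h0, ZeroMemClass.coe_zero, mul_zero, ZeroMemClass.coe_zero]
  have hxcard : (DirectSum.decompose 𝒜 x).support.card ≤ n := by
    calc (DirectSum.decompose 𝒜 x).support.card
        ≤ ((DirectSum.decompose 𝒜 y).support.image (fun k => -g + k)).card :=
          Finset.card_le_card hsub
      _ ≤ (DirectSum.decompose 𝒜 y).support.card := Finset.card_image_le
      _ = n := hycard
  refine ⟨x, hxI, hxne, ?_⟩
  intro z hz hzc
  set c : S := z * x - x * z with hc_def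
  have hcI : c ∈ I := I.sub_mem (hI z x hxI).1 (hI z x hxI).2
  have hccomp : ∀ k, (DirectSum.decompose 𝒜 c k : S) =
      z * (DirectSum.decompose 𝒜 x k : S) - (DirectSum.decompose 𝒜 x k : S) * z := by
    intro k
    rw [hc_def, DirectSum.decompose_sub, DirectSum.sub_apply, AddSubgroup.coe_sub,
      decompose_mul_left' 𝒜 hz, decompose_mul_right' 𝒜 hz, neg_zero, zero_add, add_zero]
  have hcsub : (DirectSum.decompose 𝒜 c).support ⊆
      (DirectSum.decompose 𝒜 x).support \ {0} := by
    intro k hk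
    rw [DFinsupp.mem_support_iff] at hk
    rw [Finset.mem_sdiff, Finset.mem_singleton]
    constructor
    · rw [DFinsupp.mem_support_iff]
      intro h0
      apply hk
      apply Subtype.ext
      rw [hccomp k, h0, ZeroMemClass.coe_zero, mul_zero, zero_mul, sub_zero]
    · intro hk0
      subst hk0
      apply hk
      apply Subtype.ext
      rw [hccomp 0, hzc _ (SetLike.coe_mem _), sub_self, ZeroMemClass.coe_zero]
  have hczero : c = 0 := by
    by_contra hc0
    have hle : n ≤ (DirectSum.decompose 𝒜 c).support.card :=
      Nat.find_min' hP ⟨c, hcI, hc0, rfl⟩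
    have h1 : (DirectSum.decompose 𝒜 c).support.card ≤
        ((DirectSum.decompose 𝒜 x).support \ {0}).card := Finset.card_le_card hcsub
    have h2 : ((DirectSum.decompose 𝒜 x).support \ {0}).card
        = (DirectSum.decompose 𝒜 x).support.card - 1 := by
      rw [Finset.card_sdiff_of_subset (Finset.singleton_subset_iff.2 hx0mem), Finset.card_singleton]
    have h3 : 1 ≤ (DirectSum.decompose 𝒜 x).support.card :=
      Finset.card_pos.2 ⟨0, hx0mem⟩
    omega
  have := sub_eq_zero.1 hczero
  exact this.symm

/-- Every non-zero (two-sided) ideal of an epsilon-strongly graded ring intersects the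
centralizer of `Z(R)` non-trivially; consequently, if `R = S_e` is a maximal commutative
subring of `S`, then `S` is simple iff `S` is graded simple. -/
theorem ideal_intersects_centralizer_and_simplicity [DecidableEq ι]
    (𝒜 : ι → AddSubgroup S) [GradedRing 𝒜]
    (h : IsEpsilonStronglyGraded 𝒜) (ε : ι → S)
    (hmem : ∀ g : ι, ε g ∈ 𝒜 g * 𝒜 (-g))
    (hid : ∀ g : ι, ∀ s ∈ 𝒜 g, ε g * s = s ∧ s * ε (-g) = s) :
    -- every non-zero ideal meets the centralizer of Z(R)
    (∀ I : AddSubgroup S, (∀ s : S, ∀ x ∈ I, s * x ∈ I ∧ x * s ∈ I) → I ≠ ⊥ →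
      ∃ x ∈ I, x ≠ 0 ∧ ∀ z : S, z ∈ 𝒜 0 → (∀ y ∈ 𝒜 0, z * y = y * z) → x * z = z * x) ∧
    -- if R is maximal commutative in S, then S is simple iff S is graded simple
    ((∀ s : S, (∀ r ∈ 𝒜 0, s * r = r * s) ↔ s ∈ 𝒜 0) →
      ((∀ I : AddSubgroup S, (∀ s : S, ∀ x ∈ I, s * x ∈ I ∧ x * s ∈ I) → I = ⊥ ∨ I = ⊤) ↔
       (∀ I : AddSubgroup S, (∀ s : S, ∀ x ∈ I, s * x ∈ I ∧ x * s ∈ I) →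
          (∀ x ∈ I, ∀ g : ι, ((DirectSum.decompose 𝒜 x) g : S) ∈ I) → I = ⊥ ∨ I = ⊤))) := by
  classical
  have p1 := part_one 𝒜 ε hmem hid
  refine ⟨p1, ?_⟩
  intro hmax
  constructor
  · intro hs I hI _
    exact hs I hI
  · intro hgr I hI
    by_cases hbot : I = ⊥
    · exact Or.inl hbot
    right
    obtain ⟨x, hxI, hxne, hxcomm⟩ := p1 I hI hbot
    have hRcomm : ∀ z ∈ 𝒜 0, ∀ r ∈ 𝒜 0, z * r = r * z := fun z hz r hr => (hmax z).2 hz r hr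
    have hx0 : x ∈ 𝒜 0 := (hmax x).1 (fun r hr => hxcomm r hr (hRcomm r hr))
    have hε0 : ε 0 ∈ 𝒜 0 := (h.1 0).1 (hmem 0)
    have hxid := hid 0 x hx0
    rw [neg_zero] at hxid
    set gens : Set S := {w | ∃ a : ι, ∃ s ∈ 𝒜 a, ∃ b : ι, ∃ t ∈ 𝒜 b, w = s * x * t} with hgens
    set J : AddSubgroup S := AddSubgroup.closure gens with hJ
    have hJI : J ≤ I := by
      rw [hJ, AddSubgroup.closure_le]
      rintro w ⟨a, s, hs, b, t, ht, rfl⟩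
      exact (hI t _ (hI s x hxI).1).2
    have hxJ : x ∈ J := by
      apply AddSubgroup.subset_closure
      exact ⟨0, ε 0, hε0, 0, ε 0, hε0, by rw [hxid.1, hxid.2]⟩
    have hhom : ∀ a : ι, ∀ s ∈ 𝒜 a, ∀ w ∈ J, s * w ∈ J ∧ w * s ∈ J := by
      intro a s hs w hw
      refine AddSubgroup.closure_induction
        (p := fun w _ => s * w ∈ J ∧ w * s ∈ J) ?_ ?_ ?_ ?_ hw
      · rintro w ⟨c, u, hu, d, t, ht, rfl⟩
        constructor
        · exact AddSubgroup.subset_closure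
            ⟨a + c, s * u, SetLike.mul_mem_graded hs hu, d, t, ht, by simp [mul_assoc]⟩
        · exact AddSubgroup.subset_closure
            ⟨c, u, hu, d + a, t * s, SetLike.mul_mem_graded ht hs, by simp [mul_assoc]⟩
      · simp [J.zero_mem]
      · intro u v _ _ hu hv
        exact ⟨by rw [mul_add]; exact J.add_mem hu.1 hv.1,
               by rw [add_mul]; exact J.add_mem hu.2 hv.2⟩
      · intro u _ hu
        exact ⟨by rw [mul_neg]; exact J.neg_mem hu.1,
               by rw [neg_mul]; exact J.neg_mem hu.2⟩
    have hJideal : ∀ s : S, ∀ w ∈ J, s * w ∈ J ∧ w * s ∈ J := by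
      intro s w hw
      constructor
      · have hs : s * w = ∑ k ∈ (DirectSum.decompose 𝒜 s).support,
            (DirectSum.decompose 𝒜 s k : S) * w := by
          rw [← Finset.sum_mul, DirectSum.sum_support_decompose]
        rw [hs]
        exact AddSubgroup.sum_mem _ (fun k _ => (hhom k _ (SetLike.coe_mem _) w hw).1)
      · have hs : w * s = ∑ k ∈ (DirectSum.decompose 𝒜 s).support,
            w * (DirectSum.decompose 𝒜 s k : S) := by
          rw [← Finset.mul_sum, DirectSum.sum_support_decompose]
        rw [hs]
        exact AddSubgroup.sum_mem _ (fun k _ => (hhom k _ (SetLike.coe_mem _) w hw).2)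
    have hJgr : ∀ w ∈ J, ∀ k : ι, ((DirectSum.decompose 𝒜 w) k : S) ∈ J := by
      intro w hw
      refine AddSubgroup.closure_induction
        (p := fun w _ => ∀ k : ι, ((DirectSum.decompose 𝒜 w) k : S) ∈ J) ?_ ?_ ?_ ?_ hw
      · rintro w ⟨a, s, hs, b, t, ht, rfl⟩ k
        have hm : s * x * t ∈ 𝒜 (a + 0 + b) :=
          SetLike.mul_mem_graded (SetLike.mul_mem_graded hs hx0) ht
        by_cases hk : k = a + 0 + b
        · subst hk
          rw [DirectSum.decompose_of_mem_same 𝒜 hm]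
          exact AddSubgroup.subset_closure ⟨a, s, hs, b, t, ht, rfl⟩
        · rw [DirectSum.decompose_of_mem_ne 𝒜 hm (fun hh => hk hh.symm)]
          exact J.zero_mem
      · intro k
        simp only [DirectSum.decompose_zero, DirectSum.zero_apply, ZeroMemClass.coe_zero]
        exact J.zero_mem
      · intro u v _ _ hu hv k
        rw [DirectSum.decompose_add, DirectSum.add_apply, AddSubgroup.coe_add]
        exact J.add_mem (hu k) (hv k)
      · intro u _ hu k
        rw [DirectSum.decompose_neg, DFinsupp.neg_apply, AddSubgroup.coe_neg]
        exact J.neg_mem (hu k)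
    rcases hgr J hJideal hJgr with hb | ht
    · exact absurd (by rw [hb] at hxJ; exact (AddSubgroup.mem_bot).1 hxJ) hxne
    · exact eq_top_iff.2 (ht ▸ hJI)
end
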